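/- arXiv:2204.04108 — 11 statements merged into one kernel-verified Lean document; each statement's English description precedes it below -/
import Mathlib

section
/- Let d ≥ 2 be an integer and k, l nonnegative integers. For every finite subset X of the complex unit sphere Ω(d), the sum Σ_{a,b ∈ X} g^d_{k,l}(a*b) is a real number and is nonnegative. -/
noncomputable section
open MvPolynomial Finset

variable {d : ℕ}

abbrev σd (d : ℕ) := Sum (Fin d) (Fin d)

def wt {d : ℕ} (α : σd d →₀ ℕ) : ℕ := ∏ j : σd d, (α j).factorial

noncomputable def EE {d : ℕ} (p q : MvPolynomial (σd d) ℂ) : ℂ :=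
  ∑ α ∈ p.support, (wt α : ℂ) * coeff α p * coeff α q

lemma EE_eq_sum {p q : MvPolynomial (σd d) ℂ} {s : Finset (σd d →₀ ℕ)}
    (hs : p.support ⊆ s) :
    EE p q = ∑ α ∈ s, (wt α : ℂ) * coeff α p * coeff α q := by
  refine Finset.sum_subset hs (fun α _ hα => ?_)
  rw [MvPolynomial.notMem_support_iff] at hα
  simp [hα]

lemma EE_comm (p q : MvPolynomial (σd d) ℂ) : EE p q = EE q p := by
  rw [EE_eq_sum (s := p.support ∪ q.support) subset_union_left,
    EE_eq_sum (s := p.support ∪ q.support) subset_union_right]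
  exact Finset.sum_congr (by rw [union_comm]) (fun α _ => by ring)

lemma EE_add_left (p p' q : MvPolynomial (σd d) ℂ) :
    EE (p + p') q = EE p q + EE p' q := by
  rw [EE_eq_sum (s := p.support ∪ p'.support) (fun _ h => MvPolynomial.support_add h),
    EE_eq_sum (s := p.support ∪ p'.support) subset_union_left,
    EE_eq_sum (s := p.support ∪ p'.support) subset_union_right, ← Finset.sum_add_distrib]
  exact Finset.sum_congr rfl (fun α _ => by rw [coeff_add]; ring)

lemma EE_zero_left (q : MvPolynomial (σd d) ℂ) : EE 0 q = 0 := by simp [EE]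

lemma EE_add_right (p q q' : MvPolynomial (σd d) ℂ) :
    EE p (q + q') = EE p q + EE p q' := by
  simp [EE, coeff_add, mul_add, Finset.sum_add_distrib]

lemma EE_zero_right (p : MvPolynomial (σd d) ℂ) : EE p 0 = 0 := by simp [EE]

lemma EE_sum_left {ι : Type*} (s : Finset ι) (f : ι → MvPolynomial (σd d) ℂ)
    (q : MvPolynomial (σd d) ℂ) : EE (∑ a ∈ s, f a) q = ∑ a ∈ s, EE (f a) q := by
  classical
  induction s using Finset.induction_on with
  | empty => simp [EE_zero_left]
  | insert _ _ h ih => rw [Finset.sum_insert h, Finset.sum_insert h, EE_add_left, ih]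

lemma EE_sum_right {ι : Type*} (s : Finset ι) (p : MvPolynomial (σd d) ℂ)
    (f : ι → MvPolynomial (σd d) ℂ) : EE p (∑ a ∈ s, f a) = ∑ a ∈ s, EE p (f a) := by
  classical
  induction s using Finset.induction_on with
  | empty => simp [EE_zero_right]
  | insert _ _ h ih => rw [Finset.sum_insert h, Finset.sum_insert h, EE_add_right, ih]

lemma EE_C_mul_left (c : ℂ) (p q : MvPolynomial (σd d) ℂ) :
    EE (C c * p) q = c * EE p q := by
  have hsub : (C c * p).support ⊆ p.support := by
    intro α hα
    rw [MvPolynomial.mem_support_iff] at hα ⊢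
    rw [coeff_C_mul] at hα
    exact fun h => hα (by rw [h, mul_zero])
  rw [EE_eq_sum (s := p.support) hsub, EE, Finset.mul_sum]
  exact Finset.sum_congr rfl (fun α _ => by rw [coeff_C_mul]; ring)

lemma EE_C_mul_right (c : ℂ) (p q : MvPolynomial (σd d) ℂ) :
    EE p (C c * q) = c * EE p q := by
  simp [EE, coeff_C_mul, Finset.mul_sum]; exact Finset.sum_congr rfl (fun α _ => by ring)

lemma EE_monomial_left (β : σd d →₀ ℕ) (c : ℂ) (q : MvPolynomial (σd d) ℂ) :
    EE (monomial β c) q = (wt β : ℂ) * c * coeff β q := by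
  rw [EE_eq_sum (s := {β}) support_monomial_subset, Finset.sum_singleton, coeff_monomial]
  simp

lemma wt_add_single (β : σd d →₀ ℕ) (i : σd d) :
    wt (β + Finsupp.single i 1) = wt β * (β i + 1) := by
  classical
  unfold wt
  rw [← Finset.prod_erase_mul _ _ (Finset.mem_univ i),
    ← Finset.prod_erase_mul _ _ (Finset.mem_univ i)]
  have h1 : ∀ j ∈ Finset.univ.erase i,
      (((β + Finsupp.single i 1) : σd d →₀ ℕ) j).factorial = (β j).factorial := by
    intro j hj
    rw [Finsupp.add_apply, Finsupp.single_apply,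
      if_neg (fun h => (Finset.mem_erase.mp hj).1 h.symm), add_zero]
  rw [Finset.prod_congr rfl h1, Finsupp.add_apply, Finsupp.single_apply, if_pos rfl,
    Nat.factorial_succ]
  ring

lemma coeff_pderiv (i : σd d) (β : σd d →₀ ℕ) (q : MvPolynomial (σd d) ℂ) :
    coeff β (pderiv i q) = ((β i + 1 : ℕ) : ℂ) * coeff (β + Finsupp.single i 1) q := by
  induction q using MvPolynomial.induction_on' with
  | add p q hp hq => rw [map_add, coeff_add, coeff_add, hp, hq]; ring
  | monomial γ c =>
    rw [pderiv_monomial, coeff_monomial, coeff_monomial]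
    by_cases hgi : γ i = 0
    · have hne : ¬ (γ = β + Finsupp.single i 1) := fun h => by
        have := DFunLike.congr_fun h i
        rw [Finsupp.add_apply, Finsupp.single_apply, if_pos rfl] at this
        omega
      rw [if_neg hne]
      split_ifs <;> simp [hgi]
    · have hiff : (γ - Finsupp.single i 1 = β) ↔ (γ = β + Finsupp.single i 1) := by
        constructor
        · intro h
          ext j
          have := DFunLike.congr_fun h j
          rw [Finsupp.tsub_apply, Finsupp.single_apply] at this
          rw [Finsupp.add_apply, Finsupp.single_apply]
          by_cases hji : i = j
          · subst hji; simp at this ⊢; omega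
          · rw [if_neg hji] at this ⊢; omega
        · intro h
          subst h
          ext j
          rw [Finsupp.tsub_apply, Finsupp.add_apply, Finsupp.single_apply]
          by_cases hji : i = j <;> simp [hji]
      by_cases h : γ = β + Finsupp.single i 1
      · rw [if_pos (hiff.mpr h), if_pos h]
        have hbi : γ i = β i + 1 := by
          subst h; rw [Finsupp.add_apply, Finsupp.single_apply, if_pos rfl]
        rw [hbi]
        push_cast
        ring
      · rw [if_neg (fun hh => h (hiff.mp hh)), if_neg h, mul_zero]

lemma pderiv_comm' (i j : σd d) (q : MvPolynomial (σd d) ℂ) :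
    pderiv i (pderiv j q) = pderiv j (pderiv i q) := by
  apply MvPolynomial.ext
  intro β
  rw [coeff_pderiv, coeff_pderiv, coeff_pderiv, coeff_pderiv]
  by_cases hij : i = j
  · subst hij; rfl
  · rw [show β + Finsupp.single i 1 + Finsupp.single j 1
        = β + Finsupp.single j 1 + Finsupp.single i 1 by
      rw [add_assoc, add_assoc, add_comm (Finsupp.single i 1)]]
    rw [Finsupp.add_apply, Finsupp.add_apply, Finsupp.single_apply, Finsupp.single_apply,
      if_neg hij, if_neg (fun h => hij h.symm), add_zero, add_zero]
    ring

lemma EE_X_mul (i : σd d) (p q : MvPolynomial (σd d) ℂ) :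
    EE (X i * p) q = EE p (pderiv i q) := by
  induction p using MvPolynomial.induction_on' with
  | add f g hf hg => rw [mul_add, EE_add_left, EE_add_left, hf, hg]
  | monomial β c =>
    rw [show (X i : MvPolynomial (σd d) ℂ) * monomial β c
        = monomial (β + Finsupp.single i 1) c by
      rw [X, monomial_mul, one_mul, add_comm]]
    rw [EE_monomial_left, EE_monomial_left, coeff_pderiv, wt_add_single]
    push_cast
    ring

lemma EE_mul_X (i : σd d) (p q : MvPolynomial (σd d) ℂ) :
    EE p (X i * q) = EE (pderiv i p) q := by
  rw [EE_comm, EE_X_mul, EE_comm]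

def La (u : Fin d → ℂ) : MvPolynomial (σd d) ℂ := ∑ i, C (u i) * X (Sum.inl i)
def Lb (v : Fin d → ℂ) : MvPolynomial (σd d) ℂ := ∑ i, C (v i) * X (Sum.inr i)
def Tp (d : ℕ) : MvPolynomial (σd d) ℂ := ∑ i, X (Sum.inl i) * X (Sum.inr i)
def Lap (p : MvPolynomial (σd d) ℂ) : MvPolynomial (σd d) ℂ :=
  ∑ i, pderiv (Sum.inl i) (pderiv (Sum.inr i) p)

lemma pd_La_inl (u : Fin d → ℂ) (i : Fin d) : pderiv (Sum.inl i) (La u) = C (u i) := by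
  rw [La, map_sum, Finset.sum_eq_single i]
  · rw [pderiv_C_mul, pderiv_X_self, mul_one]
  · intro j _ hji
    rw [pderiv_C_mul, pderiv_X_of_ne (by simp [hji]), mul_zero]
  · exact fun h => absurd (Finset.mem_univ i) h

lemma pd_La_inr (u : Fin d → ℂ) (i : Fin d) : pderiv (Sum.inr i) (La u) = 0 := by
  rw [La, map_sum]
  refine Finset.sum_eq_zero (fun j _ => ?_)
  rw [pderiv_C_mul, pderiv_X_of_ne (by simp), mul_zero]

lemma pd_Lb_inl (v : Fin d → ℂ) (i : Fin d) : pderiv (Sum.inl i) (Lb v) = 0 := by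
  rw [Lb, map_sum]
  refine Finset.sum_eq_zero (fun j _ => ?_)
  rw [pderiv_C_mul, pderiv_X_of_ne (by simp), mul_zero]

lemma pd_Lb_inr (v : Fin d → ℂ) (i : Fin d) : pderiv (Sum.inr i) (Lb v) = C (v i) := by
  rw [Lb, map_sum, Finset.sum_eq_single i]
  · rw [pderiv_C_mul, pderiv_X_self, mul_one]
  · intro j _ hji
    rw [pderiv_C_mul, pderiv_X_of_ne (by simp [hji]), mul_zero]
  · exact fun h => absurd (Finset.mem_univ i) h

lemma pd_Tp_inl (i : Fin d) : pderiv (Sum.inl i) (Tp d) = X (Sum.inr i) := by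
  rw [Tp, map_sum, Finset.sum_eq_single i]
  · rw [pderiv_mul, pderiv_X_self, pderiv_X_of_ne (by simp), one_mul, mul_zero, add_zero]
  · intro j _ hji
    rw [pderiv_mul, pderiv_X_of_ne (by simp [hji]), pderiv_X_of_ne (by simp), zero_mul,
      mul_zero, add_zero]
  · exact fun h => absurd (Finset.mem_univ i) h

lemma pd_Tp_inr (i : Fin d) : pderiv (Sum.inr i) (Tp d) = X (Sum.inl i) := by
  rw [Tp, map_sum, Finset.sum_eq_single i]
  · rw [pderiv_mul, pderiv_X_self, pderiv_X_of_ne (by simp), mul_one, zero_mul, zero_add]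
  · intro j _ hji
    rw [pderiv_mul, pderiv_X_of_ne (by simp), pderiv_X_of_ne (by simp [hji]), zero_mul,
      mul_zero, add_zero]
  · exact fun h => absurd (Finset.mem_univ i) h

lemma pd_natCast (i : σd d) (n : ℕ) : pderiv i ((n : MvPolynomial (σd d) ℂ)) = 0 := by
  rw [← C_eq_coe_nat]; exact pderiv_C

lemma pd_step (u v : Fin d → ℂ) (r p q : ℕ) (i : Fin d) :
    pderiv (Sum.inl i) (pderiv (Sum.inr i) (Tp d ^ r * La u ^ p * Lb v ^ q)) =
      ((r : MvPolynomial (σd d) ℂ) * ((r-1 : ℕ) : MvPolynomial (σd d) ℂ) * Tp d ^ (r-1-1)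
          * La u ^ p * Lb v ^ q) * (X (Sum.inl i) * X (Sum.inr i))
      + ((r : MvPolynomial (σd d) ℂ) * Tp d ^ (r-1) * La u ^ p * Lb v ^ q) * 1
      + ((r : MvPolynomial (σd d) ℂ) * (p : MvPolynomial (σd d) ℂ) * Tp d ^ (r-1)
          * La u ^ (p-1) * Lb v ^ q) * (X (Sum.inl i) * C (u i))
      + ((q : MvPolynomial (σd d) ℂ) * (r : MvPolynomial (σd d) ℂ) * Tp d ^ (r-1)
          * La u ^ p * Lb v ^ (q-1)) * (X (Sum.inr i) * C (v i))
      + ((q : MvPolynomial (σd d) ℂ) * (p : MvPolynomial (σd d) ℂ) * Tp d ^ r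
          * La u ^ (p-1) * Lb v ^ (q-1)) * (C (u i) * C (v i)) := by
  simp only [pderiv_mul, pderiv_pow, pd_Tp_inr, pd_La_inr, pd_Lb_inr, pd_Tp_inl,
    pd_La_inl, pd_Lb_inl, pd_natCast, pderiv_C, pderiv_X_self, map_add, mul_zero, zero_mul,
    add_zero, zero_add, mul_one, one_mul]
  ring

lemma mergeA (x : MvPolynomial (σd d) ℂ) (m : ℕ) :
    ((m : MvPolynomial (σd d) ℂ)) * x ^ (m-1) * x = (m : MvPolynomial (σd d) ℂ) * x ^ m := by
  cases m with
  | zero => simp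
  | succ t => simp only [Nat.add_sub_cancel]; ring

lemma Lap_term (u v : Fin d → ℂ) (huv : ∑ i, u i * v i = 1) (r p q : ℕ) :
    Lap (Tp d ^ r * La u ^ p * Lb v ^ q) =
      ((r * (d + (r-1) + p + q) : ℕ) : MvPolynomial (σd d) ℂ)
          * (Tp d ^ (r-1) * La u ^ p * Lb v ^ q)
      + ((p * q : ℕ) : MvPolynomial (σd d) ℂ)
          * (Tp d ^ r * La u ^ (p-1) * Lb v ^ (q-1)) := by
  have sum_XC : ∑ i, X (Sum.inl i) * C (u i) = La u := by
    rw [La]; exact Finset.sum_congr rfl (fun i _ => mul_comm _ _)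
  have sum_XCr : ∑ i, X (Sum.inr i) * C (v i) = Lb v := by
    rw [Lb]; exact Finset.sum_congr rfl (fun i _ => mul_comm _ _)
  have sum_CC : ∑ i, C (u i) * C (v i) = (1 : MvPolynomial (σd d) ℂ) := by
    simp_rw [← C_mul]
    rw [← map_sum, huv, C_1]
  rw [Lap, Finset.sum_congr rfl (fun i _ => pd_step u v r p q i)]
  rw [Finset.sum_add_distrib, Finset.sum_add_distrib, Finset.sum_add_distrib,
    Finset.sum_add_distrib, ← Finset.mul_sum, ← Finset.mul_sum, ← Finset.mul_sum,
    ← Finset.mul_sum, ← Finset.mul_sum]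
  rw [show ∑ i : Fin d, X (Sum.inl i) * X (Sum.inr i) = Tp d from rfl, sum_XC, sum_XCr, sum_CC,
    Finset.sum_const, Finset.card_univ, Fintype.card_fin, nsmul_eq_mul, mul_one]
  push_cast
  linear_combination ((r : MvPolynomial (σd d) ℂ) * La u ^ p * Lb v ^ q) * mergeA (Tp d) (r-1)
    + ((r : MvPolynomial (σd d) ℂ) * Tp d ^ (r-1) * Lb v ^ q) * mergeA (La u) p
    + ((r : MvPolynomial (σd d) ℂ) * Tp d ^ (r-1) * La u ^ p) * mergeA (Lb v) q

def cJ (d k l r : ℕ) : ℂ :=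
  (-1 : ℂ) ^ r * ((Nat.factorial (d + k + l - r - 2) : ℂ) /
      ((Nat.factorial r : ℂ) * (Nat.factorial (k - r)) * (Nat.factorial (l - r))))

def hgen (d k l : ℕ) (u v : Fin d → ℂ) : MvPolynomial (σd d) ℂ :=
  ∑ r ∈ Finset.range (min k l + 1),
    C (cJ d k l r) * (Tp d ^ r * La u ^ (k-r) * Lb v ^ (l-r))

lemma cJ_rec (d k l r : ℕ) (hd : 2 ≤ d) (hk : r + 1 ≤ k) (hl : r + 1 ≤ l) :
    cJ d k l (r+1) * (((r+1) * (d + r + (k-(r+1)) + (l-(r+1))) : ℕ) : ℂ)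
      + cJ d k l r * (((k-r)*(l-r) : ℕ) : ℂ) = 0 := by
  obtain ⟨k', rfl⟩ : ∃ k', k = r + 1 + k' := ⟨k - (r+1), by omega⟩
  obtain ⟨l', rfl⟩ : ∃ l', l = r + 1 + l' := ⟨l - (r+1), by omega⟩
  obtain ⟨d', rfl⟩ : ∃ d', d = 2 + d' := ⟨d - 2, by omega⟩
  unfold cJ
  have e1 : (2+d') + (r+1+k') + (r+1+l') - (r+1) - 2 = d'+k'+l'+r+1 := by omega
  have e2 : (2+d') + (r+1+k') + (r+1+l') - r - 2 = d'+k'+l'+r+1+1 := by omega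
  have e3 : r+1+k' - (r+1) = k' := by omega
  have e4 : r+1+l' - (r+1) = l' := by omega
  have e5 : r+1+k' - r = k'+1 := by omega
  have e6 : r+1+l' - r = l'+1 := by omega
  rw [e1, e2, e3, e4, e5, e6]
  have hr : ((r.factorial : ℂ)) ≠ 0 := Nat.cast_ne_zero.mpr (Nat.factorial_ne_zero r)
  have hk' : ((k'.factorial : ℂ)) ≠ 0 := Nat.cast_ne_zero.mpr (Nat.factorial_ne_zero k')
  have hl' : ((l'.factorial : ℂ)) ≠ 0 := Nat.cast_ne_zero.mpr (Nat.factorial_ne_zero l')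
  have hr1 : (((r+1).factorial : ℂ)) ≠ 0 := Nat.cast_ne_zero.mpr (Nat.factorial_ne_zero _)
  have hk1 : (((k'+1).factorial : ℂ)) ≠ 0 := Nat.cast_ne_zero.mpr (Nat.factorial_ne_zero _)
  have hl1 : (((l'+1).factorial : ℂ)) ≠ 0 := Nat.cast_ne_zero.mpr (Nat.factorial_ne_zero _)
  field_simp
  simp only [Nat.factorial_succ]
  push_cast
  ring

lemma Lap_sum {ι : Type*} (s : Finset ι) (f : ι → MvPolynomial (σd d) ℂ) :
    Lap (∑ r ∈ s, f r) = ∑ r ∈ s, Lap (f r) := by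
  unfold Lap; simp_rw [map_sum]; exact Finset.sum_comm

lemma Lap_C_mul (c : ℂ) (p : MvPolynomial (σd d) ℂ) : Lap (C c * p) = C c * Lap p := by
  unfold Lap; simp_rw [pderiv_C_mul]; rw [Finset.mul_sum]

lemma Lap_hgen (k l : ℕ) (hd : 2 ≤ d) (u v : Fin d → ℂ) (huv : ∑ i, u i * v i = 1) :
    Lap (hgen d k l u v) = 0 := by
  rw [hgen, Lap_sum]
  have step : ∀ r ∈ Finset.range (min k l + 1),
      Lap (C (cJ d k l r) * (Tp d ^ r * La u ^ (k-r) * Lb v ^ (l-r)))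
        = C (cJ d k l r) * (((r * (d + (r-1) + (k-r) + (l-r)) : ℕ) : MvPolynomial (σd d) ℂ)
            * (Tp d ^ (r-1) * La u ^ (k-r) * Lb v ^ (l-r)))
          + C (cJ d k l r) * ((((k-r) * (l-r) : ℕ) : MvPolynomial (σd d) ℂ)
            * (Tp d ^ r * La u ^ (k-r-1) * Lb v ^ (l-r-1))) := by
    intro r _
    rw [Lap_C_mul, Lap_term u v huv, mul_add]
  rw [Finset.sum_congr rfl step, Finset.sum_add_distrib]
  rw [Finset.sum_range_succ', Finset.sum_range_succ]
  have hm0 : (k - min k l) * (l - min k l) = 0 := by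
    rcases Nat.le_total k l with h|h
    · rw [Nat.min_eq_left h, Nat.sub_self, Nat.zero_mul]
    · rw [Nat.min_eq_right h, Nat.sub_self, Nat.mul_zero]
  rw [hm0]
  simp only [Nat.zero_mul, Nat.cast_zero, zero_mul, mul_zero, add_zero]
  rw [← Finset.sum_add_distrib]
  refine Finset.sum_eq_zero (fun r hr => ?_)
  rw [Finset.mem_range] at hr
  have hk : r + 1 ≤ k := le_trans hr (min_le_left _ _)
  have hl : r + 1 ≤ l := le_trans hr (min_le_right _ _)
  simp only [Nat.add_sub_cancel]
  rw [Nat.sub_sub k r 1, Nat.sub_sub l r 1]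
  have hc := congrArg (fun z : ℂ => (C z : MvPolynomial (σd d) ℂ)) (cJ_rec d k l r hd hk hl)
  simp only [map_add, map_mul, C_eq_coe_nat, map_zero] at hc
  linear_combination (Tp d ^ r * La u ^ (k - (r+1)) * Lb v ^ (l - (r+1))) * hc
-- CHUNK E (to be appended to main)
lemma EE_natCast_mul_right (n : ℕ) (p q : MvPolynomial (σd d) ℂ) :
    EE p ((n : MvPolynomial (σd d) ℂ) * q) = (n : ℂ) * EE p q := by
  rw [← C_eq_coe_nat, EE_C_mul_right]

lemma EE_T_mul (p q : MvPolynomial (σd d) ℂ) : EE (Tp d * p) q = EE p (Lap q) := by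
  rw [Tp, Finset.sum_mul, EE_sum_left, Lap, EE_sum_right]
  refine Finset.sum_congr rfl (fun i _ => ?_)
  rw [mul_assoc, EE_X_mul, EE_X_mul, pderiv_comm']

lemma EE_T_pow_mul (r : ℕ) (p q : MvPolynomial (σd d) ℂ) :
    EE (Tp d ^ r * p) q = EE p (Lap^[r] q) := by
  induction r generalizing q with
  | zero => rw [pow_zero, one_mul]; simp
  | succ r ih =>
    rw [pow_succ, mul_comm (Tp d ^ r) (Tp d), mul_assoc, EE_T_mul, ih,
      ← Function.iterate_succ_apply]

lemma pd_target_inl (w z : Fin d → ℂ) (p q : ℕ) (i : Fin d) :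
    pderiv (Sum.inl i) (La w ^ p * Lb z ^ q)
      = C (w i) * ((p : MvPolynomial (σd d) ℂ) * (La w ^ (p-1) * Lb z ^ q)) := by
  rw [pderiv_mul, pderiv_pow, pderiv_pow, pd_La_inl, pd_Lb_inl, mul_zero, mul_zero, add_zero]
  ring

lemma pd_target_inr (w z : Fin d → ℂ) (p q : ℕ) (i : Fin d) :
    pderiv (Sum.inr i) (La w ^ p * Lb z ^ q)
      = C (z i) * ((q : MvPolynomial (σd d) ℂ) * (La w ^ p * Lb z ^ (q-1))) := by
  rw [pderiv_mul, pderiv_pow, pderiv_pow, pd_La_inr, pd_Lb_inr, mul_zero, zero_mul, zero_add]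
  ring

lemma Lap_pair (u v : Fin d → ℂ) (huv : ∑ i, u i * v i = 1) (p q : ℕ) :
    Lap (La u ^ p * Lb v ^ q)
      = ((p * q : ℕ) : MvPolynomial (σd d) ℂ) * (La u ^ (p-1) * Lb v ^ (q-1)) := by
  have h := Lap_term u v huv 0 p q
  simp only [pow_zero, one_mul, Nat.zero_mul, Nat.cast_zero, zero_mul, zero_add] at h
  rw [h]

lemma Lap_iter (u v : Fin d → ℂ) (huv : ∑ i, u i * v i = 1) (k l r : ℕ)
    (hrk : r ≤ k) (hrl : r ≤ l) :
    Lap^[r] (La u ^ k * Lb v ^ l)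
      = C ((k.descFactorial r * l.descFactorial r : ℕ) : ℂ)
          * (La u ^ (k-r) * Lb v ^ (l-r)) := by
  induction r with
  | zero => simp
  | succ r ih =>
    have hrk' : r ≤ k := by omega
    have hrl' : r ≤ l := by omega
    rw [Function.iterate_succ_apply', ih hrk' hrl', Lap_C_mul, Lap_pair u v huv,
      ← C_eq_coe_nat, ← mul_assoc, ← map_mul, Nat.sub_sub, Nat.sub_sub]
    congr 1
    rw [Nat.descFactorial_succ, Nat.descFactorial_succ]
    push_cast
    ring

lemma EE_La_mul (u : Fin d → ℂ) (p q : MvPolynomial (σd d) ℂ) :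
    EE (La u * p) q = ∑ i, u i * EE p (pderiv (Sum.inl i) q) := by
  rw [La, Finset.sum_mul, EE_sum_left]
  refine Finset.sum_congr rfl (fun i _ => ?_)
  rw [mul_assoc, EE_C_mul_left, EE_X_mul]

lemma EE_Lb_mul (v : Fin d → ℂ) (p q : MvPolynomial (σd d) ℂ) :
    EE (Lb v * p) q = ∑ i, v i * EE p (pderiv (Sum.inr i) q) := by
  rw [Lb, Finset.sum_mul, EE_sum_left]
  refine Finset.sum_congr rfl (fun i _ => ?_)
  rw [mul_assoc, EE_C_mul_left, EE_X_mul]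

lemma EE_one_one : EE (1 : MvPolynomial (σd d) ℂ) 1 = 1 := by
  rw [show (1 : MvPolynomial (σd d) ℂ) = monomial 0 1 by rw [← C_apply, map_one],
    EE_monomial_left]
  have hwt : wt (0 : σd d →₀ ℕ) = 1 := by
    unfold wt
    simp
  rw [hwt, coeff_monomial]
  simp

lemma EE_eval_pair (u v w z : Fin d → ℂ) (p q : ℕ) :
    EE (La u ^ p * Lb v ^ q) (La w ^ p * Lb z ^ q)
      = ((p.factorial : ℂ) * (q.factorial : ℂ))
          * ((∑ i, u i * w i) ^ p * (∑ i, v i * z i) ^ q) := by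
  induction p with
  | succ p ihp =>
    rw [pow_succ' (La u), mul_assoc, EE_La_mul]
    set S := ∑ i, u i * w i with hS
    set T := ∑ i, v i * z i with hT
    set c := ((p+1 : ℕ) : ℂ) * (((p.factorial : ℂ) * (q.factorial : ℂ)) * (S ^ p * T ^ q))
      with hc
    have e : ∀ i : Fin d,
        EE (La u ^ p * Lb v ^ q) (pderiv (Sum.inl i) (La w ^ (p+1) * Lb z ^ q))
          = w i * c := by
      intro i
      rw [pd_target_inl, Nat.add_sub_cancel, EE_C_mul_right, EE_natCast_mul_right, ihp, hc]
    calc (∑ i, u i * EE (La u ^ p * Lb v ^ q)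
            (pderiv (Sum.inl i) (La w ^ (p+1) * Lb z ^ q)))
        = ∑ i, u i * w i * c := Finset.sum_congr rfl (fun i _ => by rw [e i, ← mul_assoc])
      _ = S * c := by rw [← Finset.sum_mul, ← hS]
      _ = ((p+1).factorial : ℂ) * (q.factorial : ℂ) * (S ^ (p+1) * T ^ q) := by
          rw [hc, Nat.factorial_succ]; push_cast; ring
  | zero =>
    induction q with
    | zero => simpa using EE_one_one
    | succ q ihq =>
      rw [show La u ^ 0 * Lb v ^ (q+1) = Lb v * (La u ^ 0 * Lb v ^ q) by
        rw [pow_succ' (Lb v)]; ring]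
      rw [EE_Lb_mul]
      set S := ∑ i, u i * w i with hS
      set T := ∑ i, v i * z i with hT
      set c := ((q+1 : ℕ) : ℂ) * (((Nat.factorial 0 : ℂ) * (q.factorial : ℂ))
          * (S ^ 0 * T ^ q)) with hc
      have e : ∀ i : Fin d,
          EE (La u ^ 0 * Lb v ^ q) (pderiv (Sum.inr i) (La w ^ 0 * Lb z ^ (q+1)))
            = z i * c := by
        intro i
        rw [pd_target_inr, Nat.add_sub_cancel, EE_C_mul_right, EE_natCast_mul_right, ihq, hc]
      calc (∑ i, v i * EE (La u ^ 0 * Lb v ^ q)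
              (pderiv (Sum.inr i) (La w ^ 0 * Lb z ^ (q+1))))
          = ∑ i, v i * z i * c := Finset.sum_congr rfl (fun i _ => by rw [e i, ← mul_assoc])
        _ = T * c := by rw [← Finset.sum_mul, ← hT]
        _ = (Nat.factorial 0 : ℂ) * ((q+1).factorial : ℂ) * (S ^ 0 * T ^ (q+1)) := by
            rw [hc, Nat.factorial_succ]; push_cast; ring
-- CHUNK F
lemma EE_pairing (k l : ℕ) (hd : 2 ≤ d) (u v w z : Fin d → ℂ)
    (huv : ∑ i, u i * v i = 1) (hwz : ∑ i, w i * z i = 1) :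
    EE (hgen d k l u v) (hgen d k l w z)
      = cJ d k l 0 * ((k.factorial : ℂ) * (l.factorial : ℂ))
          * ∑ r ∈ Finset.range (min k l + 1), cJ d k l r
              * ((∑ i, u i * w i) ^ (k-r) * (∑ i, v i * z i) ^ (l-r)) := by
  have hsplit : hgen d k l w z
      = C (cJ d k l 0) * (Tp d ^ 0 * La w ^ (k-0) * Lb z ^ (l-0))
        + Tp d * (∑ r ∈ Finset.range (min k l), C (cJ d k l (r+1))
            * (Tp d ^ r * La w ^ (k-(r+1)) * Lb z ^ (l-(r+1)))) := by
    rw [hgen, Finset.sum_range_succ', add_comm]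
    congr 1
    rw [Finset.mul_sum]
    exact Finset.sum_congr rfl (fun r _ => by rw [pow_succ' (Tp d)]; ring)
  rw [hsplit, EE_add_right]
  have hzero : EE (hgen d k l u v)
      (Tp d * (∑ r ∈ Finset.range (min k l), C (cJ d k l (r+1))
        * (Tp d ^ r * La w ^ (k-(r+1)) * Lb z ^ (l-(r+1))))) = 0 := by
    rw [EE_comm, EE_T_mul, Lap_hgen k l hd u v huv, EE_zero_right]
  rw [hzero, add_zero, Nat.sub_zero, Nat.sub_zero, pow_zero, one_mul, EE_C_mul_right]
  rw [hgen, EE_sum_left, Finset.mul_sum, Finset.mul_sum]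
  refine Finset.sum_congr rfl (fun r hr => ?_)
  rw [Finset.mem_range] at hr
  have hrk : r ≤ k := by have := Nat.min_le_left k l; omega
  have hrl : r ≤ l := by have := Nat.min_le_right k l; omega
  rw [EE_C_mul_left, mul_assoc (Tp d ^ r), EE_T_pow_mul,
    Lap_iter w z hwz k l r hrk hrl, EE_C_mul_right, EE_eval_pair]
  have hfk : ((k - r).factorial : ℂ) * (k.descFactorial r : ℂ) = (k.factorial : ℂ) := by
    exact_mod_cast congrArg (Nat.cast : ℕ → ℂ) (Nat.factorial_mul_descFactorial hrk)
  have hfl : ((l - r).factorial : ℂ) * (l.descFactorial r : ℂ) = (l.factorial : ℂ) := by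
    exact_mod_cast congrArg (Nat.cast : ℕ → ℂ) (Nat.factorial_mul_descFactorial hrl)
  push_cast
  linear_combination (cJ d k l 0 * cJ d k l r * ((∑ i, u i * w i) ^ (k-r)
      * (∑ i, v i * z i) ^ (l-r)) * ((l-r).factorial : ℂ) * (l.descFactorial r : ℂ)) * hfk
    + (cJ d k l 0 * cJ d k l r * ((∑ i, u i * w i) ^ (k-r)
      * (∑ i, v i * z i) ^ (l-r)) * (k.factorial : ℂ)) * hfl
-- CHUNK G
lemma cJ_conj (k l r : ℕ) : (starRingEnd ℂ) (cJ d k l r) = cJ d k l r := by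
  unfold cJ
  simp [map_div₀]

lemma map_conj_La (u : Fin d → ℂ) :
    MvPolynomial.map (starRingEnd ℂ) (La u) = La (fun i => (starRingEnd ℂ) (u i)) := by
  rw [La, La, map_sum]
  exact Finset.sum_congr rfl (fun i _ => by rw [map_mul, map_C, MvPolynomial.map_X])

lemma map_conj_Lb (v : Fin d → ℂ) :
    MvPolynomial.map (starRingEnd ℂ) (Lb v) = Lb (fun i => (starRingEnd ℂ) (v i)) := by
  rw [Lb, Lb, map_sum]
  exact Finset.sum_congr rfl (fun i _ => by rw [map_mul, map_C, MvPolynomial.map_X])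

lemma map_conj_Tp : MvPolynomial.map (starRingEnd ℂ) (Tp d) = Tp d := by
  rw [Tp, map_sum]
  exact Finset.sum_congr rfl (fun i _ => by
    rw [map_mul, MvPolynomial.map_X, MvPolynomial.map_X])

lemma map_conj_hgen (k l : ℕ) (u v : Fin d → ℂ) :
    MvPolynomial.map (starRingEnd ℂ) (hgen d k l u v)
      = hgen d k l (fun i => (starRingEnd ℂ) (u i)) (fun i => (starRingEnd ℂ) (v i)) := by
  rw [hgen, hgen, map_sum]
  refine Finset.sum_congr rfl (fun r _ => ?_)
  rw [map_mul, map_C, cJ_conj, map_mul, map_mul, map_pow, map_pow, map_pow,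
    map_conj_La, map_conj_Lb, map_conj_Tp]

lemma EE_conj_self (p : MvPolynomial (σd d) ℂ) :
    ∃ t : ℝ, 0 ≤ t ∧ EE (MvPolynomial.map (starRingEnd ℂ) p) p = (t : ℂ) := by
  have hsub : (MvPolynomial.map (starRingEnd ℂ) p).support ⊆ p.support := by
    intro α hα
    rw [MvPolynomial.mem_support_iff] at hα ⊢
    rw [MvPolynomial.coeff_map] at hα
    exact fun h => hα (by rw [h, map_zero])
  refine ⟨∑ α ∈ p.support, (wt α : ℝ) * Complex.normSq (coeff α p),
    Finset.sum_nonneg (fun α _ => mul_nonneg (Nat.cast_nonneg _) (Complex.normSq_nonneg _)),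
    ?_⟩
  rw [EE_eq_sum hsub, Complex.ofReal_sum]
  refine Finset.sum_congr rfl (fun α _ => ?_)
  rw [MvPolynomial.coeff_map, Complex.ofReal_mul, mul_assoc, mul_comm ((starRingEnd ℂ) _),
    Complex.mul_conj]
  norm_cast
-- CHUNK H : given definitions and final theorem
/-- The Hermitian inner product `a*b = ∑ conj(a i) * b i` on `ℂ^d`. -/
noncomputable def hermInner {d : ℕ} (a b : Fin d → ℂ) : ℂ :=
  ∑ i, (starRingEnd ℂ) (a i) * b i

/-- The dimension `m^d_{k,l}` of the space `Harm_d(k,l)`. -/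
def harmDim (d k l : ℕ) : ℕ :=
  (d + k - 1).choose (d - 1) * (d + l - 1).choose (d - 1) -
    (d + k - 2).choose (d - 1) * (d + l - 2).choose (d - 1)

/-- The Jacobi polynomial `g^d_{k,l}` as a function `ℂ → ℂ`. -/
noncomputable def gJacobi (d k l : ℕ) (x : ℂ) : ℂ :=
  ((harmDim d k l : ℂ) * (Nat.factorial (d - 2)) * (Nat.factorial k) * (Nat.factorial l) /
      ((Nat.factorial (d + k - 2)) * (Nat.factorial (d + l - 2)))) *
    ∑ r ∈ Finset.range (min k l + 1),
      (-1 : ℂ) ^ r * ((Nat.factorial (d + k + l - r - 2) : ℂ) /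
          ((Nat.factorial r : ℂ) * (Nat.factorial (k - r)) * (Nat.factorial (l - r)))) *
        x ^ (k - r) * ((starRingEnd ℂ) x) ^ (l - r)

lemma hprod (d k l : ℕ) :
    cJ d k l 0 * ((k.factorial : ℂ) * (l.factorial : ℂ))
      = (((d+k+l-2).factorial : ℕ) : ℂ) := by
  unfold cJ
  rw [Nat.sub_zero, Nat.sub_zero, Nat.sub_zero, pow_zero, Nat.factorial_zero]
  have hk : ((k.factorial : ℂ)) ≠ 0 := Nat.cast_ne_zero.mpr (Nat.factorial_ne_zero k)
  have hl : ((l.factorial : ℂ)) ≠ 0 := Nat.cast_ne_zero.mpr (Nat.factorial_ne_zero l)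
  field_simp
  simp

theorem jacobi_sum_nonneg (d k l : ℕ) (hd : 2 ≤ d) (X : Finset (Fin d → ℂ))
    (hX : ∀ z ∈ X, hermInner z z = 1) :
    (∑ a ∈ X, ∑ b ∈ X, gJacobi d k l (hermInner a b)).im = 0 ∧
      0 ≤ (∑ a ∈ X, ∑ b ∈ X, gJacobi d k l (hermInner a b)).re := by
  classical
  obtain ⟨t, ht0, htE⟩ := EE_conj_self
    (∑ b ∈ X, hgen d k l (fun i => (starRingEnd ℂ) (b i)) b)
  -- conj of the big sum
  have hmap : MvPolynomial.map (starRingEnd ℂ)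
      (∑ b ∈ X, hgen d k l (fun i => (starRingEnd ℂ) (b i)) b)
        = ∑ a ∈ X, hgen d k l a (fun i => (starRingEnd ℂ) (a i)) := by
    rw [map_sum]
    refine Finset.sum_congr rfl (fun b hb => ?_)
    rw [map_conj_hgen]
    simp only [Complex.conj_conj]
  have hexp : EE (MvPolynomial.map (starRingEnd ℂ)
        (∑ b ∈ X, hgen d k l (fun i => (starRingEnd ℂ) (b i)) b))
        (∑ b ∈ X, hgen d k l (fun i => (starRingEnd ℂ) (b i)) b)
      = ∑ a ∈ X, ∑ b ∈ X, EE (hgen d k l a (fun i => (starRingEnd ℂ) (a i)))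
          (hgen d k l (fun i => (starRingEnd ℂ) (b i)) b) := by
    rw [hmap, EE_sum_left]
    exact Finset.sum_congr rfl (fun a _ => EE_sum_right _ _ _)
  have hpair : ∀ a ∈ X, ∀ b ∈ X,
      EE (hgen d k l a (fun i => (starRingEnd ℂ) (a i)))
          (hgen d k l (fun i => (starRingEnd ℂ) (b i)) b)
        = (((d+k+l-2).factorial : ℕ) : ℂ) * (starRingEnd ℂ)
            (∑ r ∈ Finset.range (min k l + 1), cJ d k l r
              * (hermInner a b) ^ (k-r) * ((starRingEnd ℂ) (hermInner a b)) ^ (l-r)) := by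
    intro a ha b hb
    have huv : ∑ i, a i * (starRingEnd ℂ) (a i) = 1 := by
      have h1 := hX a ha
      rw [hermInner] at h1
      rw [← h1]
      exact Finset.sum_congr rfl (fun i _ => mul_comm _ _)
    have hwz : ∑ i, (starRingEnd ℂ) (b i) * b i = 1 := hX b hb
    rw [EE_pairing k l hd a (fun i => (starRingEnd ℂ) (a i)) (fun i => (starRingEnd ℂ) (b i))
      b huv hwz]
    have hSuw : (∑ i, a i * (starRingEnd ℂ) (b i)) = (starRingEnd ℂ) (hermInner a b) := by
      rw [hermInner, map_sum]
      exact Finset.sum_congr rfl (fun i _ => by rw [map_mul, Complex.conj_conj, mul_comm])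
    have hSvz : (∑ i, (starRingEnd ℂ) (a i) * b i) = hermInner a b := rfl
    rw [hSuw, hSvz, hprod d k l, map_sum, Finset.mul_sum, Finset.mul_sum]
    refine Finset.sum_congr rfl (fun r _ => ?_)
    rw [map_mul, map_mul, map_pow, map_pow, cJ_conj, Complex.conj_conj]
    ring
  have hG : (t : ℂ) = (((d+k+l-2).factorial : ℕ) : ℂ) * (starRingEnd ℂ)
      (∑ a ∈ X, ∑ b ∈ X, ∑ r ∈ Finset.range (min k l + 1), cJ d k l r
        * (hermInner a b) ^ (k-r) * ((starRingEnd ℂ) (hermInner a b)) ^ (l-r)) := by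
    rw [← htE, hexp, map_sum, Finset.mul_sum]
    refine Finset.sum_congr rfl (fun a ha => ?_)
    rw [map_sum, Finset.mul_sum]
    exact Finset.sum_congr rfl (fun b hb => hpair a ha b hb)
  have hNne : (((d+k+l-2).factorial : ℝ)) ≠ 0 :=
    Nat.cast_ne_zero.mpr (Nat.factorial_ne_zero _)
  have hconjG : (starRingEnd ℂ)
      (∑ a ∈ X, ∑ b ∈ X, ∑ r ∈ Finset.range (min k l + 1), cJ d k l r
        * (hermInner a b) ^ (k-r) * ((starRingEnd ℂ) (hermInner a b)) ^ (l-r))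
      = ((t / ((d+k+l-2).factorial : ℝ) : ℝ) : ℂ) := by
    have hNneC : ((((d+k+l-2).factorial : ℕ)) : ℂ) ≠ 0 :=
      Nat.cast_ne_zero.mpr (Nat.factorial_ne_zero _)
    rw [eq_comm, Complex.ofReal_div, div_eq_iff (by exact_mod_cast hNneC)]
    push_cast
    push_cast at hG
    linear_combination hG
  have hGr : (∑ a ∈ X, ∑ b ∈ X, ∑ r ∈ Finset.range (min k l + 1), cJ d k l r
        * (hermInner a b) ^ (k-r) * ((starRingEnd ℂ) (hermInner a b)) ^ (l-r))
      = ((t / ((d+k+l-2).factorial : ℝ) : ℝ) : ℂ) := by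
    have h2 := congrArg (starRingEnd ℂ) hconjG
    rwa [Complex.conj_conj, Complex.conj_ofReal] at h2
  have hs0 : 0 ≤ t / (((d+k+l-2).factorial : ℝ)) :=
    div_nonneg ht0 (Nat.cast_nonneg _)
  have hA : ((harmDim d k l : ℂ) * (Nat.factorial (d - 2)) * (Nat.factorial k)
        * (Nat.factorial l) / ((Nat.factorial (d + k - 2)) * (Nat.factorial (d + l - 2))))
      = (((harmDim d k l : ℝ) * (Nat.factorial (d - 2)) * (Nat.factorial k)
        * (Nat.factorial l) / ((Nat.factorial (d + k - 2)) * (Nat.factorial (d + l - 2))) : ℝ)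
          : ℂ) := by
    push_cast
    ring
  have hA0 : 0 ≤ ((harmDim d k l : ℝ) * (Nat.factorial (d - 2)) * (Nat.factorial k)
      * (Nat.factorial l) / ((Nat.factorial (d + k - 2)) * (Nat.factorial (d + l - 2))) : ℝ) := by
    positivity
  have hsum : ∑ a ∈ X, ∑ b ∈ X, gJacobi d k l (hermInner a b)
      = ((harmDim d k l : ℂ) * (Nat.factorial (d - 2)) * (Nat.factorial k)
        * (Nat.factorial l) / ((Nat.factorial (d + k - 2)) * (Nat.factorial (d + l - 2))))
        * (∑ a ∈ X, ∑ b ∈ X, ∑ r ∈ Finset.range (min k l + 1), cJ d k l r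
            * (hermInner a b) ^ (k-r) * ((starRingEnd ℂ) (hermInner a b)) ^ (l-r)) := by
    simp only [gJacobi, cJ, Finset.mul_sum]
  rw [hsum, hGr, hA, ← Complex.ofReal_mul]
  constructor
  · exact Complex.ofReal_im _
  · rw [Complex.ofReal_re]
    exact mul_nonneg hA0 hs0
end
end

section
/- Let d ≥ 1 and let X be a finite subset of the complex unit sphere Ω(d). Then the sum Σ_{x,y,z ∈ X} ((y*z) − conj(x*y)·(x*z))^3 is a real number and is nonnegative. -/
open Finset

noncomputable def prVec {d : ℕ} (x y : Fin d → ℂ) : Fin d → ℂ :=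
  fun i => y i - hermInner x y * x i

noncomputable def tcube {d : ℕ} (u : Fin d → ℂ) : Fin d × Fin d × Fin d → ℂ :=
  fun p => u p.1 * u p.2.1 * u p.2.2

lemma herm_pr {d : ℕ} (x y z : Fin d → ℂ) (hx : hermInner x x = 1) :
    hermInner (prVec x y) (prVec x z)
      = hermInner y z - (starRingEnd ℂ) (hermInner x y) * hermInner x z := by
  have hyx : (∑ i, (starRingEnd ℂ) (y i) * x i) = (starRingEnd ℂ) (hermInner x y) := by
    simp only [hermInner, map_sum, map_mul, RingHomCompTriple.comp_apply,
      RingHom.id_apply, starRingEnd_self_apply]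
    exact Finset.sum_congr rfl fun i _ => by ring
  have expand : ∀ i, (starRingEnd ℂ) (prVec x y i) * prVec x z i =
      (starRingEnd ℂ) (y i) * z i
        - hermInner x z * ((starRingEnd ℂ) (y i) * x i)
        - (starRingEnd ℂ) (hermInner x y) * ((starRingEnd ℂ) (x i) * z i)
        + (starRingEnd ℂ) (hermInner x y) * hermInner x z
            * ((starRingEnd ℂ) (x i) * x i) := by
    intro i
    simp only [prVec, map_sub, map_mul]
    ring
  calc hermInner (prVec x y) (prVec x z)
      = ∑ i, ((starRingEnd ℂ) (y i) * z i
        - hermInner x z * ((starRingEnd ℂ) (y i) * x i)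
        - (starRingEnd ℂ) (hermInner x y) * ((starRingEnd ℂ) (x i) * z i)
        + (starRingEnd ℂ) (hermInner x y) * hermInner x z
            * ((starRingEnd ℂ) (x i) * x i)) := by
        exact Finset.sum_congr rfl fun i _ => expand i
    _ = hermInner y z - hermInner x z * (∑ i, (starRingEnd ℂ) (y i) * x i)
        - (starRingEnd ℂ) (hermInner x y) * hermInner x z
        + (starRingEnd ℂ) (hermInner x y) * hermInner x z * hermInner x x := by
        simp only [hermInner, Finset.sum_add_distrib, Finset.sum_sub_distrib,
          ← Finset.mul_sum]
    _ = hermInner y z - (starRingEnd ℂ) (hermInner x y) * hermInner x z := by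
        rw [hyx, hx]; ring

lemma cube_inner {d : ℕ} (u v : Fin d → ℂ) :
    hermInner u v ^ 3 = ∑ p : Fin d × Fin d × Fin d,
      (starRingEnd ℂ) (tcube u p) * tcube v p := by
  have : hermInner u v ^ 3 = hermInner u v * hermInner u v * hermInner u v := by ring
  rw [this]
  simp only [hermInner, Finset.sum_mul, Finset.mul_sum, tcube, Fintype.sum_prod_type, map_mul]
  exact Finset.sum_congr rfl fun i _ => Finset.sum_congr rfl fun j _ =>
    Finset.sum_congr rfl fun k _ => by ring

lemma gram_sum {ι α : Type*} [Fintype ι] (X : Finset α) (f : α → ι → ℂ) :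
    ∑ y ∈ X, ∑ z ∈ X, ∑ p, (starRingEnd ℂ) (f y p) * f z p
      = ∑ p, (Complex.normSq (∑ y ∈ X, f y p) : ℂ) := by
  calc ∑ y ∈ X, ∑ z ∈ X, ∑ p, (starRingEnd ℂ) (f y p) * f z p
      = ∑ p, ∑ y ∈ X, ∑ z ∈ X, (starRingEnd ℂ) (f y p) * f z p := by
        have h1 : ∀ y, ∑ z ∈ X, ∑ p, (starRingEnd ℂ) (f y p) * f z p
            = ∑ p, ∑ z ∈ X, (starRingEnd ℂ) (f y p) * f z p := fun y => Finset.sum_comm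
        simp only [h1]
        exact Finset.sum_comm
    _ = ∑ p, (starRingEnd ℂ) (∑ y ∈ X, f y p) * (∑ z ∈ X, f z p) := by
        refine Finset.sum_congr rfl fun p _ => ?_
        rw [map_sum, Finset.sum_mul]
        exact Finset.sum_congr rfl fun y _ => (Finset.mul_sum _ _ _).symm
    _ = ∑ p, (Complex.normSq (∑ y ∈ X, f y p) : ℂ) := by
        refine Finset.sum_congr rfl fun p _ => ?_
        rw [mul_comm, Complex.mul_conj]

theorem three_point_cube_sum_nonneg (d : ℕ) (hd : 1 ≤ d) (X : Finset (Fin d → ℂ))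
    (hX : ∀ z ∈ X, hermInner z z = 1) :
    (∑ x ∈ X, ∑ y ∈ X, ∑ z ∈ X,
        (hermInner y z - (starRingEnd ℂ) (hermInner x y) * hermInner x z) ^ 3).im = 0 ∧
      0 ≤ (∑ x ∈ X, ∑ y ∈ X, ∑ z ∈ X,
        (hermInner y z - (starRingEnd ℂ) (hermInner x y) * hermInner x z) ^ 3).re := by
  have key : ∀ x ∈ X, ∑ y ∈ X, ∑ z ∈ X,
      (hermInner y z - (starRingEnd ℂ) (hermInner x y) * hermInner x z) ^ 3
      = ((∑ p : Fin d × Fin d × Fin d,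
          Complex.normSq (∑ y ∈ X, tcube (prVec x y) p) : ℝ) : ℂ) := by
    intro x hx
    have h1 : ∑ y ∈ X, ∑ z ∈ X,
        (hermInner y z - (starRingEnd ℂ) (hermInner x y) * hermInner x z) ^ 3
        = ∑ y ∈ X, ∑ z ∈ X, ∑ p, (starRingEnd ℂ) (tcube (prVec x y) p)
            * tcube (prVec x z) p := by
      refine Finset.sum_congr rfl fun y _ => Finset.sum_congr rfl fun z _ => ?_
      rw [← herm_pr x y z (hX x hx), cube_inner]
    rw [h1, gram_sum, Complex.ofReal_sum]
  rw [Finset.sum_congr rfl key]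
  constructor
  · rw [Complex.im_sum]
    refine Finset.sum_eq_zero fun x _ => ?_
    exact Complex.ofReal_im _
  · rw [Complex.re_sum]
    refine Finset.sum_nonneg fun x _ => ?_
    rw [Complex.ofReal_re]
    exact Finset.sum_nonneg fun p _ => Complex.normSq_nonneg _
end

section
/- Let α₁ = −16/111, α₂ = 31/666 + (1/18)·√(127/37)·i and α₃ = conj(α₂). There is no finite subset X of the complex unit sphere Ω(63) such that: (i) for all distinct x, y ∈ X, x*y ∈ {α₁, α₂, α₃}; and (ii) for every x ∈ X, the number of y ∈ X with x*y = α₁ is 222, the number with x*y = α₂ is 333, and the number with x*y = α₃ is 333. -/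
open Finset
open scoped Classical

lemma sum_herm_nonneg {ι β : Type*} [Fintype ι] (X : Finset β) (f : β → ι → ℂ) :
    0 ≤ (∑ x ∈ X, ∑ y ∈ X, ∑ i, (starRingEnd ℂ) (f x i) * f y i).re := by
  have key : ∑ x ∈ X, ∑ y ∈ X, ∑ i, (starRingEnd ℂ) (f x i) * f y i
      = ∑ i : ι, (starRingEnd ℂ) (∑ x ∈ X, f x i) * (∑ y ∈ X, f y i) := by
    calc ∑ x ∈ X, ∑ y ∈ X, ∑ i : ι, (starRingEnd ℂ) (f x i) * f y i
        = ∑ x ∈ X, ∑ i : ι, ∑ y ∈ X, (starRingEnd ℂ) (f x i) * f y i :=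
          Finset.sum_congr rfl fun x _ => Finset.sum_comm
      _ = ∑ i : ι, ∑ x ∈ X, ∑ y ∈ X, (starRingEnd ℂ) (f x i) * f y i := Finset.sum_comm
      _ = ∑ i : ι, (starRingEnd ℂ) (∑ x ∈ X, f x i) * (∑ y ∈ X, f y i) := by
          refine Finset.sum_congr rfl fun i _ => ?_
          rw [map_sum, Finset.sum_mul_sum]
  rw [key, Complex.re_sum]
  refine Finset.sum_nonneg fun i _ => ?_
  rw [← Complex.normSq_eq_conj_mul_self, Complex.ofReal_re]
  exact Complex.normSq_nonneg _

lemma cube_expand {d : ℕ} (u v : Fin d → ℂ) :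
    (hermInner u v) ^ 3 = ∑ p : Fin d × Fin d × Fin d,
      (starRingEnd ℂ) (u p.1 * u p.2.1 * u p.2.2) * (v p.1 * v p.2.1 * v p.2.2) := by
  rw [Fintype.sum_prod_type]
  simp_rw [Fintype.sum_prod_type]
  unfold hermInner
  have h3 : (∑ i, (starRingEnd ℂ) (u i) * v i) ^ 3
      = (∑ i, (starRingEnd ℂ) (u i) * v i) * ((∑ i, (starRingEnd ℂ) (u i) * v i)
        * (∑ i, (starRingEnd ℂ) (u i) * v i)) := by ring
  rw [h3]
  simp only [Finset.sum_mul, Finset.mul_sum]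
  refine Finset.sum_congr rfl fun i _ => Finset.sum_congr rfl fun j _ =>
    Finset.sum_congr rfl fun k _ => ?_
  simp only [map_mul]
  ring

theorem no_complex_three_code_889 :
    ¬ ∃ X : Finset (Fin 63 → ℂ), X.Nonempty ∧
      (∀ z ∈ X, hermInner z z = 1) ∧
      (∀ x ∈ X, ∀ y ∈ X, x ≠ y →
        hermInner x y = (-16 / 111 : ℂ) ∨
        hermInner x y = (31 / 666 : ℂ) + (Real.sqrt (127 / 37) / 18 : ℝ) * Complex.I ∨
        hermInner x y = (31 / 666 : ℂ) - (Real.sqrt (127 / 37) / 18 : ℝ) * Complex.I) ∧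
      (∀ x ∈ X,
        (X.filter fun y => hermInner x y = (-16 / 111 : ℂ)).card = 222 ∧
        (X.filter fun y =>
          hermInner x y = (31 / 666 : ℂ) + (Real.sqrt (127 / 37) / 18 : ℝ) * Complex.I).card
            = 333 ∧
        (X.filter fun y =>
          hermInner x y = (31 / 666 : ℂ) - (Real.sqrt (127 / 37) / 18 : ℝ) * Complex.I).card
            = 333) := by
  rintro ⟨X, hne, hunit, hvals, hcards⟩
  set q : ℝ := Real.sqrt (127 / 37) / 18 with hqdef
  set α₁ : ℂ := (-16 / 111 : ℂ) with ha1
  set α₂ : ℂ := (31 / 666 : ℂ) + (q : ℂ) * Complex.I with ha2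
  set α₃ : ℂ := (31 / 666 : ℂ) - (q : ℂ) * Complex.I with ha3
  have hq_pos : 0 < q := by
    rw [hqdef]
    positivity
  have hq2 : q ^ 2 = 127 / 11988 := by
    rw [hqdef, div_pow, Real.sq_sqrt (by norm_num : (127:ℝ)/37 ≥ 0)]
    norm_num
  -- real-coercion forms of the rational constants
  have e1 : (-16 / 111 : ℂ) = (((-16 : ℝ) / 111 : ℝ) : ℂ) := by norm_num
  have e2 : (31 / 666 : ℂ) = (((31 : ℝ) / 666 : ℝ) : ℂ) := by norm_num
  -- value distinctness
  have im1 : α₁.im = 0 := by rw [ha1, e1]; simp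
  have im2 : α₂.im = q := by rw [ha2, e2]; simp
  have im3 : α₃.im = -q := by rw [ha3, e2]; simp
  have re1 : α₁.re = -16 / 111 := by rw [ha1, e1]; simp
  have re2 : α₂.re = 31 / 666 := by rw [ha2, e2]; simp
  have re3 : α₃.re = 31 / 666 := by rw [ha3, e2]; simp
  have hne12 : α₁ ≠ α₂ := fun h => by
    have := congrArg Complex.im h; rw [im1, im2] at this; exact absurd this.symm (ne_of_gt hq_pos)
  have hne13 : α₁ ≠ α₃ := fun h => by
    have := congrArg Complex.im h; rw [im1, im3] at this
    have : q = 0 := by linarith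
    exact absurd this (ne_of_gt hq_pos)
  have hne23 : α₂ ≠ α₃ := fun h => by
    have := congrArg Complex.im h; rw [im2, im3] at this
    have : q = 0 := by linarith
    exact absurd this (ne_of_gt hq_pos)
  have hone1 : (1 : ℂ) ≠ α₁ := fun h => by
    have := congrArg Complex.re h; rw [re1, Complex.one_re] at this; norm_num at this
  have hone2 : (1 : ℂ) ≠ α₂ := fun h => by
    have := congrArg Complex.re h; rw [re2, Complex.one_re] at this; norm_num at this
  have hone3 : (1 : ℂ) ≠ α₃ := fun h => by
    have := congrArg Complex.re h; rw [re3, Complex.one_re] at this; norm_num at this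
  -- the constant c
  set c : ℂ := 1 + 222 * α₁ ^ 3 + 333 * α₂ ^ 3 + 333 * α₃ ^ 3 with hcdef
  have hc_re : c.re = 1 + 222 * ((-16:ℝ)/111) ^ 3
      + 333 * (2 * ((31:ℝ)/666) ^ 3 - 6 * ((31:ℝ)/666) * q ^ 2) := by
    have hcube : α₂ ^ 3 + α₃ ^ 3
        = ((2 * ((31:ℝ)/666) ^ 3 - 6 * ((31:ℝ)/666) * q ^ 2 : ℝ) : ℂ) := by
      rw [ha2, ha3, e2]
      have : ((((31:ℝ)/666 : ℝ) : ℂ) + (q:ℂ) * Complex.I) ^ 3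
          + ((((31:ℝ)/666 : ℝ) : ℂ) - (q:ℂ) * Complex.I) ^ 3
          = 2 * (((31:ℝ)/666 : ℝ) : ℂ) ^ 3
            + 6 * (((31:ℝ)/666 : ℝ) : ℂ) * ((q:ℂ) ^ 2 * Complex.I ^ 2) := by ring
      rw [this, Complex.I_sq]
      push_cast
      ring
    have hc2 : c = (((1 + 222 * ((-16:ℝ)/111) ^ 3
        + 333 * (2 * ((31:ℝ)/666) ^ 3 - 6 * ((31:ℝ)/666) * q ^ 2)) : ℝ) : ℂ) := by
      rw [hcdef, ha1, e1]
      have : (1 : ℂ) + 222 * ((((-16:ℝ)/111 : ℝ)) : ℂ) ^ 3 + 333 * α₂ ^ 3 + 333 * α₃ ^ 3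
          = 1 + 222 * ((((-16:ℝ)/111 : ℝ)) : ℂ) ^ 3 + 333 * (α₂ ^ 3 + α₃ ^ 3) := by ring
      rw [this, hcube]
      push_cast
      ring
    rw [hc2, Complex.ofReal_re]
  have hc_neg : c.re < 0 := by
    rw [hc_re, hq2]
    norm_num
  -- per-vertex sum
  have hrow : ∀ x ∈ X, ∑ y ∈ X, (hermInner x y) ^ 3 = c := by
    intro x hx
    have hxx : hermInner x x = 1 := hunit x hx
    set F1 := X.filter (fun y => hermInner x y = α₁) with hF1
    set F2 := X.filter (fun y => hermInner x y = α₂) with hF2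
    set F3 := X.filter (fun y => hermInner x y = α₃) with hF3
    obtain ⟨hc1, hc2', hc3⟩ := hcards x hx
    have hd12 : Disjoint F1 F2 := by
      rw [Finset.disjoint_left]
      intro y h1 h2
      exact hne12 ((Finset.mem_filter.mp h1).2.symm.trans (Finset.mem_filter.mp h2).2)
    have hd13 : Disjoint F1 F3 := by
      rw [Finset.disjoint_left]
      intro y h1 h2
      exact hne13 ((Finset.mem_filter.mp h1).2.symm.trans (Finset.mem_filter.mp h2).2)
    have hd23 : Disjoint F2 F3 := by
      rw [Finset.disjoint_left]
      intro y h1 h2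
      exact hne23 ((Finset.mem_filter.mp h1).2.symm.trans (Finset.mem_filter.mp h2).2)
    have herase : X.erase x = F1 ∪ F2 ∪ F3 := by
      ext y
      simp only [Finset.mem_erase, Finset.mem_union, hF1, hF2, hF3, Finset.mem_filter]
      constructor
      · rintro ⟨hyx, hy⟩
        rcases hvals x hx y hy (Ne.symm hyx) with h | h | h
        · exact Or.inl (Or.inl ⟨hy, h⟩)
        · exact Or.inl (Or.inr ⟨hy, h⟩)
        · exact Or.inr ⟨hy, h⟩
      · rintro ((⟨hy, h⟩ | ⟨hy, h⟩) | ⟨hy, h⟩)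
        · exact ⟨fun he => hone1 (by subst he; rw [← hxx]; exact h), hy⟩
        · exact ⟨fun he => hone2 (by subst he; rw [← hxx]; exact h), hy⟩
        · exact ⟨fun he => hone3 (by subst he; rw [← hxx]; exact h), hy⟩
    have hsplit : ∑ y ∈ X, (hermInner x y) ^ 3
        = (hermInner x x) ^ 3 + ∑ y ∈ X.erase x, (hermInner x y) ^ 3 :=
      (Finset.add_sum_erase X _ hx).symm
    have hsum1 : ∑ y ∈ F1, (hermInner x y) ^ 3 = 222 * α₁ ^ 3 := by
      rw [Finset.sum_congr rfl (fun y hy => by rw [(Finset.mem_filter.mp hy).2]),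
        Finset.sum_const, hc1, nsmul_eq_mul]
      norm_num
    have hsum2 : ∑ y ∈ F2, (hermInner x y) ^ 3 = 333 * α₂ ^ 3 := by
      rw [Finset.sum_congr rfl (fun y hy => by rw [(Finset.mem_filter.mp hy).2]),
        Finset.sum_const, hc2', nsmul_eq_mul]
      norm_num
    have hsum3 : ∑ y ∈ F3, (hermInner x y) ^ 3 = 333 * α₃ ^ 3 := by
      rw [Finset.sum_congr rfl (fun y hy => by rw [(Finset.mem_filter.mp hy).2]),
        Finset.sum_const, hc3, nsmul_eq_mul]
      norm_num
    rw [hsplit, hxx, herase, Finset.sum_union (Finset.disjoint_union_left.mpr ⟨hd13, hd23⟩),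
      Finset.sum_union hd12, hsum1, hsum2, hsum3, hcdef]
    ring
  -- total sum
  have htot : ∑ x ∈ X, ∑ y ∈ X, (hermInner x y) ^ 3 = (X.card : ℂ) * c := by
    rw [Finset.sum_congr rfl hrow, Finset.sum_const, nsmul_eq_mul]
  have hnonneg : 0 ≤ (∑ x ∈ X, ∑ y ∈ X, (hermInner x y) ^ 3).re := by
    have := sum_herm_nonneg (ι := Fin 63 × Fin 63 × Fin 63) X
      (fun x p => x p.1 * x p.2.1 * x p.2.2)
    simpa only [← cube_expand] using this
  rw [htot] at hnonneg
  have hre : ((X.card : ℂ) * c).re = (X.card : ℝ) * c.re := by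
    rw [Complex.mul_re]
    simp
  rw [hre] at hnonneg
  have hcard : 0 < (X.card : ℝ) := by
    have := Finset.card_pos.mpr hne
    exact_mod_cast this
  nlinarith [mul_pos hcard (neg_pos.mpr hc_neg)]
end

section
/- Let α₁ = −4/59, α₂ = 13/118 + (3√35/118)·i and α₃ = conj(α₂). There is no finite subset X of the complex unit sphere Ω(59) such that: (i) for all distinct x, y ∈ X, x*y ∈ {α₁, α₂, α₃}; and (ii) for every x ∈ X, the number of y ∈ X with x*y = α₁ is 590, the number with x*y = α₂ is 177, and the number with x*y = α₃ is 177. -/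
open Finset
open scoped Classical

private lemma cube_expand_s7 {d : ℕ} (x y : Fin d → ℂ) :
    (hermInner x y) ^ 3 = ∑ t : Fin d × Fin d × Fin d,
      (starRingEnd ℂ) (x t.1 * x t.2.1 * x t.2.2) * (y t.1 * y t.2.1 * y t.2.2) := by
  simp only [hermInner, Fintype.sum_prod_type]
  have h3 : ∀ z : ℂ, z ^ 3 = z * z * z := fun z => by ring
  rw [h3, Finset.sum_mul_sum, Finset.sum_mul]
  refine Finset.sum_congr rfl fun a _ => ?_
  rw [Finset.sum_mul]
  refine Finset.sum_congr rfl fun b _ => ?_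
  rw [Finset.mul_sum]
  refine Finset.sum_congr rfl fun c _ => ?_
  simp only [map_mul]
  ring

private lemma cube_sum_nonneg {d : ℕ} (X : Finset (Fin d → ℂ)) :
    0 ≤ (∑ x ∈ X, ∑ y ∈ X, (hermInner x y) ^ 3).re := by
  have key : ∑ x ∈ X, ∑ y ∈ X, (hermInner x y) ^ 3
      = ∑ t : Fin d × Fin d × Fin d,
        ((Complex.normSq (∑ x ∈ X, x t.1 * x t.2.1 * x t.2.2) : ℝ) : ℂ) := by
    have step : ∀ t : Fin d × Fin d × Fin d,
        ((Complex.normSq (∑ x ∈ X, x t.1 * x t.2.1 * x t.2.2) : ℝ) : ℂ)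
        = ∑ x ∈ X, ∑ y ∈ X,
            (starRingEnd ℂ) (x t.1 * x t.2.1 * x t.2.2) * (y t.1 * y t.2.1 * y t.2.2) := by
      intro t
      rw [Complex.normSq_eq_conj_mul_self, map_sum, Finset.sum_mul_sum]
    calc ∑ x ∈ X, ∑ y ∈ X, (hermInner x y) ^ 3
        = ∑ x ∈ X, ∑ y ∈ X, ∑ t : Fin d × Fin d × Fin d,
            (starRingEnd ℂ) (x t.1 * x t.2.1 * x t.2.2) * (y t.1 * y t.2.1 * y t.2.2) := by
          exact Finset.sum_congr rfl fun x _ => Finset.sum_congr rfl fun y _ => cube_expand_s7 x y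
      _ = ∑ t : Fin d × Fin d × Fin d, ∑ x ∈ X, ∑ y ∈ X,
            (starRingEnd ℂ) (x t.1 * x t.2.1 * x t.2.2) * (y t.1 * y t.2.1 * y t.2.2) := by
          rw [show (∑ x ∈ X, ∑ y ∈ X, ∑ t : Fin d × Fin d × Fin d,
              (starRingEnd ℂ) (x t.1 * x t.2.1 * x t.2.2) * (y t.1 * y t.2.1 * y t.2.2))
            = ∑ x ∈ X, ∑ t : Fin d × Fin d × Fin d, ∑ y ∈ X,
              (starRingEnd ℂ) (x t.1 * x t.2.1 * x t.2.2) * (y t.1 * y t.2.1 * y t.2.2)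
            from Finset.sum_congr rfl fun x _ => Finset.sum_comm]
          exact Finset.sum_comm
      _ = ∑ t : Fin d × Fin d × Fin d,
            ((Complex.normSq (∑ x ∈ X, x t.1 * x t.2.1 * x t.2.2) : ℝ) : ℂ) := by
          exact Finset.sum_congr rfl fun t _ => (step t).symm
  rw [key, Complex.re_sum]
  refine Finset.sum_nonneg fun t _ => ?_
  simp [Complex.normSq_nonneg]

theorem no_complex_three_code_945 :
    ¬ ∃ X : Finset (Fin 59 → ℂ), X.Nonempty ∧
      (∀ z ∈ X, hermInner z z = 1) ∧
      (∀ x ∈ X, ∀ y ∈ X, x ≠ y →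
        hermInner x y = (-4 / 59 : ℂ) ∨
        hermInner x y = (13 / 118 : ℂ) + (3 * Real.sqrt 35 / 118 : ℝ) * Complex.I ∨
        hermInner x y = (13 / 118 : ℂ) - (3 * Real.sqrt 35 / 118 : ℝ) * Complex.I) ∧
      (∀ x ∈ X,
        (X.filter fun y => hermInner x y = (-4 / 59 : ℂ)).card = 590 ∧
        (X.filter fun y =>
          hermInner x y = (13 / 118 : ℂ) + (3 * Real.sqrt 35 / 118 : ℝ) * Complex.I).card
            = 177 ∧
        (X.filter fun y =>
          hermInner x y = (13 / 118 : ℂ) - (3 * Real.sqrt 35 / 118 : ℝ) * Complex.I).card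
            = 177) := by
  rintro ⟨X, hne, hnorm, hrel, hdeg⟩
  set a1 : ℂ := (-4 / 59 : ℂ) with ha1
  set a2 : ℂ := (13 / 118 : ℂ) + (3 * Real.sqrt 35 / 118 : ℝ) * Complex.I with ha2
  set a3 : ℂ := (13 / 118 : ℂ) - (3 * Real.sqrt 35 / 118 : ℝ) * Complex.I with ha3
  have hs : ((Real.sqrt 35 : ℝ) : ℂ) ^ 2 = 35 := by
    rw [← Complex.ofReal_pow, Real.sq_sqrt (by norm_num : (0:ℝ) ≤ 35)]
    norm_num
  have himpos : (0:ℝ) < 3 * Real.sqrt 35 / 118 := by positivity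
  have hima2 : a2.im = 3 * Real.sqrt 35 / 118 := by simp [ha2]
  have hima3 : a3.im = -(3 * Real.sqrt 35 / 118) := by simp [ha3]
  have h1a1 : (1:ℂ) ≠ a1 := by
    intro h
    have := congrArg Complex.re h
    norm_num [ha1] at this
  have h1a2 : (1:ℂ) ≠ a2 := by
    intro h
    have := congrArg Complex.im h
    rw [hima2] at this
    simp at this
    try linarith
  have h1a3 : (1:ℂ) ≠ a3 := by
    intro h
    have := congrArg Complex.im h
    rw [hima3] at this
    simp at this
    try linarith
  have h12 : a1 ≠ a2 := by
    intro h
    have := congrArg Complex.im h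
    rw [hima2] at this
    norm_num [ha1] at this
    try linarith
  have h13 : a1 ≠ a3 := by
    intro h
    have := congrArg Complex.im h
    rw [hima3] at this
    norm_num [ha1] at this
    try linarith
  have h23 : a2 ≠ a3 := by
    intro h
    have := congrArg Complex.im h
    rw [hima2, hima3] at this
    linarith
  -- per-point sum
  have hxsum : ∀ x ∈ X, ∑ y ∈ X, (hermInner x y) ^ 3 = (-4725 / 3481 : ℂ) := by
    intro x hx
    set F1 := X.filter (fun y => hermInner x y = a1) with hF1
    set F2 := X.filter (fun y => hermInner x y = a2) with hF2
    set F3 := X.filter (fun y => hermInner x y = a3) with hF3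
    have hxx : hermInner x x = 1 := hnorm x hx
    have hxnot : x ∉ F1 ∪ (F2 ∪ F3) := by
      simp only [Finset.mem_union, hF1, hF2, hF3, Finset.mem_filter, hxx]
      push_neg
      exact ⟨fun _ => h1a1, fun _ => h1a2, fun _ => h1a3⟩
    have hpart : X = insert x (F1 ∪ (F2 ∪ F3)) := by
      ext y
      simp only [Finset.mem_insert, Finset.mem_union, hF1, hF2, hF3, Finset.mem_filter]
      constructor
      · intro hy
        by_cases hyx : y = x
        · exact Or.inl hyx
        · rcases hrel x hx y hy (fun h => hyx h.symm) with h | h | h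
          · exact Or.inr (Or.inl ⟨hy, h⟩)
          · exact Or.inr (Or.inr (Or.inl ⟨hy, h⟩))
          · exact Or.inr (Or.inr (Or.inr ⟨hy, h⟩))
      · rintro (rfl | ⟨hy, _⟩ | ⟨hy, _⟩ | ⟨hy, _⟩) <;> first | exact hx | exact hy
    have hd23 : Disjoint F2 F3 := by
      rw [Finset.disjoint_left]
      intro y hy2 hy3
      rw [hF2, Finset.mem_filter] at hy2
      rw [hF3, Finset.mem_filter] at hy3
      exact h23 (hy2.2 ▸ hy3.2)
    have hd123 : Disjoint F1 (F2 ∪ F3) := by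
      rw [Finset.disjoint_left]
      intro y hy1 hy
      rw [hF1, Finset.mem_filter] at hy1
      rcases Finset.mem_union.1 hy with hy2 | hy3
      · rw [hF2, Finset.mem_filter] at hy2
        exact h12 (hy1.2 ▸ hy2.2)
      · rw [hF3, Finset.mem_filter] at hy3
        exact h13 (hy1.2 ▸ hy3.2)
    obtain ⟨hc1, hc2, hc3⟩ := hdeg x hx
    have hs1 : ∑ y ∈ F1, (hermInner x y) ^ 3 = 590 * a1 ^ 3 := by
      have hcon : ∀ y ∈ F1, (hermInner x y) ^ 3 = a1 ^ 3 := fun y hy => by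
        rw [hF1] at hy
        rw [(Finset.mem_filter.1 hy).2]
      rw [show (∑ y ∈ F1, (hermInner x y) ^ 3) = ∑ _y ∈ F1, a1 ^ 3
        from Finset.sum_congr rfl hcon, Finset.sum_const, hF1, hc1]
      simp
    have hs2 : ∑ y ∈ F2, (hermInner x y) ^ 3 = 177 * a2 ^ 3 := by
      have hcon : ∀ y ∈ F2, (hermInner x y) ^ 3 = a2 ^ 3 := fun y hy => by
        rw [hF2] at hy
        rw [(Finset.mem_filter.1 hy).2]
      rw [show (∑ y ∈ F2, (hermInner x y) ^ 3) = ∑ _y ∈ F2, a2 ^ 3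
        from Finset.sum_congr rfl hcon, Finset.sum_const, hF2, hc2]
      simp
    have hs3 : ∑ y ∈ F3, (hermInner x y) ^ 3 = 177 * a3 ^ 3 := by
      have hcon : ∀ y ∈ F3, (hermInner x y) ^ 3 = a3 ^ 3 := fun y hy => by
        rw [hF3] at hy
        rw [(Finset.mem_filter.1 hy).2]
      rw [show (∑ y ∈ F3, (hermInner x y) ^ 3) = ∑ _y ∈ F3, a3 ^ 3
        from Finset.sum_congr rfl hcon, Finset.sum_const, hF3, hc3]
      simp
    rw [hpart, Finset.sum_insert hxnot, Finset.sum_union hd123, Finset.sum_union hd23,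
      hs1, hs2, hs3, hxx]
    rw [ha1, ha2, ha3]
    push_cast
    linear_combination ((1053 / 13924 : ℂ) * Complex.I ^ 2) * hs
      + (36855 / 13924 : ℂ) * Complex.I_sq
  -- total sum
  have hS : (∑ x ∈ X, ∑ y ∈ X, (hermInner x y) ^ 3)
      = (X.card : ℂ) * (-4725 / 3481) := by
    rw [Finset.sum_congr rfl hxsum, Finset.sum_const, nsmul_eq_mul]
  have hpos := cube_sum_nonneg X
  rw [hS] at hpos
  have hre : ((X.card : ℂ) * (-4725 / 3481)).re = (X.card : ℝ) * (-4725 / 3481) := by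
    norm_num [Complex.mul_re]
  rw [hre] at hpos
  have hcard : 0 < X.card := Finset.card_pos.2 hne
  have hcard' : (1:ℝ) ≤ (X.card : ℝ) := by exact_mod_cast hcard
  nlinarith
end

section
/- Let d ≥ 2 be an integer and 0 < α < 1 a real number. Let X be a finite subset of the unit sphere S^{d−1} in ℝ^d such that for all distinct x, y ∈ X, the inner product ⟨x, y⟩ lies in {α, −α, 0}. If (d+4)α² ≤ 6 and (d+2)α² < 3, then |X| ≤ d(d+2)·(1−α²)/(3−(d+2)α²). -/
open Finset

/-- The Euclidean inner product on `ℝ^d`. -/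
def dotR {d : ℕ} (x y : Fin d → ℝ) : ℝ := ∑ i, x i * y i

def del (d : ℕ) (i j : Fin d) : ℝ := if i = j then 1 else 0

variable {d : ℕ}

lemma del_comm (i j : Fin d) : del d i j = del d j i := by simp [del, eq_comm]

lemma sum_del_left (i : Fin d) (f : Fin d → ℝ) : ∑ j, del d i j * f j = f i := by
  simp [del, Finset.sum_ite_eq]

lemma sum_del_right (i : Fin d) (f : Fin d → ℝ) : ∑ j, del d j i * f j = f i := by
  simp [del, Finset.sum_ite_eq']

lemma sum_del_diag : ∑ i : Fin d, del d i i = d := by simp [del]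

lemma sum4_const (c : ℝ) (F : Fin d → Fin d → Fin d → Fin d → ℝ) :
    ∑ i, ∑ j, ∑ k, ∑ l, c * F i j k l = c * ∑ i, ∑ j, ∑ k, ∑ l, F i j k l := by
  simp only [← Finset.mul_sum]

lemma F4 (f g h e : Fin d → ℝ) :
    ∑ i, ∑ j, ∑ k, ∑ l, f i * g j * h k * e l
      = (∑ i, f i) * (∑ j, g j) * (∑ k, h k) * (∑ l, e l) := by
  simp only [← Finset.mul_sum, ← Finset.sum_mul]

lemma G_ij (P : Fin d → Fin d → ℝ) (h e : Fin d → ℝ) :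
    ∑ i, ∑ j, ∑ k, ∑ l, P i j * (h k * e l)
      = (∑ i, ∑ j, P i j) * (∑ k, h k) * (∑ l, e l) := by
  simp only [← Finset.mul_sum, ← Finset.sum_mul]; try ring

lemma G_ik (P : Fin d → Fin d → ℝ) (g e : Fin d → ℝ) :
    ∑ i, ∑ j, ∑ k, ∑ l, P i k * (g j * e l)
      = (∑ i, ∑ k, P i k) * (∑ j, g j) * (∑ l, e l) := by
  simp only [← Finset.mul_sum, ← Finset.sum_mul]; try ring

lemma G_il (P : Fin d → Fin d → ℝ) (g h : Fin d → ℝ) :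
    ∑ i, ∑ j, ∑ k, ∑ l, P i l * (g j * h k)
      = (∑ i, ∑ l, P i l) * (∑ j, g j) * (∑ k, h k) := by
  simp only [← Finset.mul_sum, ← Finset.sum_mul]; try ring

lemma G_jk (P : Fin d → Fin d → ℝ) (f e : Fin d → ℝ) :
    ∑ i, ∑ j, ∑ k, ∑ l, P j k * (f i * e l)
      = (∑ j, ∑ k, P j k) * (∑ i, f i) * (∑ l, e l) := by
  simp only [← Finset.mul_sum, ← Finset.sum_mul]; try ring

lemma G_jl (P : Fin d → Fin d → ℝ) (f h : Fin d → ℝ) :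
    ∑ i, ∑ j, ∑ k, ∑ l, P j l * (f i * h k)
      = (∑ j, ∑ l, P j l) * (∑ i, f i) * (∑ k, h k) := by
  simp only [← Finset.mul_sum, ← Finset.sum_mul]; try ring

lemma G_kl (P : Fin d → Fin d → ℝ) (f g : Fin d → ℝ) :
    ∑ i, ∑ j, ∑ k, ∑ l, P k l * (f i * g j)
      = (∑ k, ∑ l, P k l) * (∑ i, f i) * (∑ j, g j) := by
  simp only [← Finset.mul_sum, ← Finset.sum_mul]; try ring

lemma H_12_34 (P Q : Fin d → Fin d → ℝ) :
    ∑ i, ∑ j, ∑ k, ∑ l, P i j * Q k l = (∑ i, ∑ j, P i j) * (∑ k, ∑ l, Q k l) := by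
  simp only [← Finset.mul_sum, ← Finset.sum_mul]; try ring

lemma H_13_24 (P Q : Fin d → Fin d → ℝ) :
    ∑ i, ∑ j, ∑ k, ∑ l, P i k * Q j l = (∑ i, ∑ k, P i k) * (∑ j, ∑ l, Q j l) := by
  simp only [← Finset.mul_sum, ← Finset.sum_mul]; try ring

lemma H_14_23 (P Q : Fin d → Fin d → ℝ) :
    ∑ i, ∑ j, ∑ k, ∑ l, P i l * Q j k = (∑ i, ∑ l, P i l) * (∑ j, ∑ k, Q j k) := by
  simp only [← Finset.mul_sum, ← Finset.sum_mul]; try ring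

lemma pairsum (f g : Fin d → ℝ) :
    ∑ i, ∑ j, f i * (del d i j * g j) = ∑ i, f i * g i := by
  simp only [← Finset.mul_sum, sum_del_left]

def Kt (d : ℕ) (x : Fin d → ℝ) (i j k l : Fin d) : ℝ :=
  ((d:ℝ)+2)*((d:ℝ)+4) * (x i * x j * x k * x l)
  - ((d:ℝ)+2) * (del d i j * (x k * x l) + del d i k * (x j * x l) + del d i l * (x j * x k)
      + del d j k * (x i * x l) + del d j l * (x i * x k) + del d k l * (x i * x j))
  + (del d i j * del d k l + del d i k * del d j l + del d i l * del d j k)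

lemma tr12 (x : Fin d → ℝ) (hx : ∑ i, x i * x i = 1) (k l : Fin d) :
    ∑ i, Kt d x i i k l = 0 := by
  have h : ∀ i, Kt d x i i k l =
      (((d:ℝ)+2)*((d:ℝ)+4)*(x k * x l)) * (x i * x i)
      - (((d:ℝ)+2)*(x k * x l)) * del d i i
      - (2*((d:ℝ)+2)* x l) * (del d i k * x i)
      - (2*((d:ℝ)+2)* x k) * (del d i l * x i)
      - (((d:ℝ)+2)* del d k l) * (x i * x i)
      + del d k l * del d i i
      + 2 * (del d i k * del d i l) := by
    intro i; simp only [Kt]; ring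
  rw [Finset.sum_congr rfl fun i _ => h i]
  simp only [Finset.sum_add_distrib, Finset.sum_sub_distrib, ← Finset.mul_sum]
  rw [hx, sum_del_diag, sum_del_right k x, sum_del_right l x,
    sum_del_right k (fun i => del d i l)]
  ring

lemma tr13 (x : Fin d → ℝ) (hx : ∑ i, x i * x i = 1) (j l : Fin d) :
    ∑ i, Kt d x i j i l = 0 := by
  have h : ∀ i, Kt d x i j i l =
      (((d:ℝ)+2)*((d:ℝ)+4)*(x j * x l)) * (x i * x i)
      - (((d:ℝ)+2) * x l) * (del d i j * x i)
      - (((d:ℝ)+2)*(x j * x l)) * del d i i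
      - (((d:ℝ)+2) * x j) * (del d i l * x i)
      - (((d:ℝ)+2) * x l) * (del d j i * x i)
      - (((d:ℝ)+2) * del d j l) * (x i * x i)
      - (((d:ℝ)+2) * x j) * (del d i l * x i)
      + (del d i j * del d i l)
      + del d j l * del d i i
      + (del d j i * del d i l) := by
    intro i; simp only [Kt]; ring
  rw [Finset.sum_congr rfl fun i _ => h i]
  simp only [Finset.sum_add_distrib, Finset.sum_sub_distrib, ← Finset.mul_sum]
  rw [hx, sum_del_diag, sum_del_right j x, sum_del_right l x, sum_del_left j x,
    sum_del_right j (fun i => del d i l), sum_del_left j (fun i => del d i l)]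
  ring

lemma tr14 (x : Fin d → ℝ) (hx : ∑ i, x i * x i = 1) (j k : Fin d) :
    ∑ i, Kt d x i j k i = 0 := by
  have h : ∀ i, Kt d x i j k i =
      (((d:ℝ)+2)*((d:ℝ)+4)*(x j * x k)) * (x i * x i)
      - (((d:ℝ)+2) * x k) * (del d i j * x i)
      - (((d:ℝ)+2) * x j) * (del d i k * x i)
      - (((d:ℝ)+2)*(x j * x k)) * del d i i
      - (((d:ℝ)+2) * del d j k) * (x i * x i)
      - (((d:ℝ)+2) * x k) * (del d j i * x i)
      - (((d:ℝ)+2) * x j) * (del d k i * x i)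
      + (del d k i * del d i j)
      + (del d j i * del d i k)
      + del d j k * del d i i := by
    intro i; simp only [Kt]; ring
  rw [Finset.sum_congr rfl fun i _ => h i]
  simp only [Finset.sum_add_distrib, Finset.sum_sub_distrib, ← Finset.mul_sum]
  rw [hx, sum_del_diag, sum_del_right j x, sum_del_right k x, sum_del_left j x,
    sum_del_left k x, sum_del_left k (fun i => del d i j),
    sum_del_left j (fun i => del d i k), del_comm k j]
  ring

lemma tr23 (x : Fin d → ℝ) (hx : ∑ i, x i * x i = 1) (i l : Fin d) :
    ∑ m, Kt d x i m m l = 0 := by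
  have h : ∀ m, Kt d x i m m l =
      (((d:ℝ)+2)*((d:ℝ)+4)*(x i * x l)) * (x m * x m)
      - (((d:ℝ)+2) * x l) * (del d i m * x m)
      - (((d:ℝ)+2) * x l) * (del d i m * x m)
      - (((d:ℝ)+2) * del d i l) * (x m * x m)
      - (((d:ℝ)+2)*(x i * x l)) * del d m m
      - (((d:ℝ)+2) * x i) * (del d m l * x m)
      - (((d:ℝ)+2) * x i) * (del d m l * x m)
      + (del d i m * del d m l)
      + (del d i m * del d m l)
      + del d i l * del d m m := by
    intro m; simp only [Kt]; ring
  rw [Finset.sum_congr rfl fun m _ => h m]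
  simp only [Finset.sum_add_distrib, Finset.sum_sub_distrib, ← Finset.mul_sum]
  rw [hx, sum_del_diag, sum_del_left i x, sum_del_right l x,
    sum_del_left i (fun m => del d m l)]
  ring

lemma tr24 (x : Fin d → ℝ) (hx : ∑ i, x i * x i = 1) (i k : Fin d) :
    ∑ m, Kt d x i m k m = 0 := by
  have h : ∀ m, Kt d x i m k m =
      (((d:ℝ)+2)*((d:ℝ)+4)*(x i * x k)) * (x m * x m)
      - (((d:ℝ)+2) * x k) * (del d i m * x m)
      - (((d:ℝ)+2) * del d i k) * (x m * x m)
      - (((d:ℝ)+2) * x k) * (del d i m * x m)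
      - (((d:ℝ)+2) * x i) * (del d m k * x m)
      - (((d:ℝ)+2)*(x i * x k)) * del d m m
      - (((d:ℝ)+2) * x i) * (del d k m * x m)
      + (del d k m * del d i m)
      + del d i k * del d m m
      + (del d i m * del d m k) := by
    intro m; simp only [Kt]; ring
  rw [Finset.sum_congr rfl fun m _ => h m]
  simp only [Finset.sum_add_distrib, Finset.sum_sub_distrib, ← Finset.mul_sum]
  rw [hx, sum_del_diag, sum_del_left i x, sum_del_right k x, sum_del_left k x,
    sum_del_left k (fun m => del d i m), sum_del_left i (fun m => del d m k),
    del_comm i k]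
  ring

lemma tr34 (x : Fin d → ℝ) (hx : ∑ i, x i * x i = 1) (i j : Fin d) :
    ∑ m, Kt d x i j m m = 0 := by
  have h : ∀ m, Kt d x i j m m =
      (((d:ℝ)+2)*((d:ℝ)+4)*(x i * x j)) * (x m * x m)
      - (((d:ℝ)+2) * del d i j) * (x m * x m)
      - (((d:ℝ)+2) * x j) * (del d i m * x m)
      - (((d:ℝ)+2) * x j) * (del d i m * x m)
      - (((d:ℝ)+2) * x i) * (del d j m * x m)
      - (((d:ℝ)+2) * x i) * (del d j m * x m)
      - (((d:ℝ)+2)*(x i * x j)) * del d m m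
      + del d i j * del d m m
      + (del d j m * del d i m)
      + (del d j m * del d i m) := by
    intro m; simp only [Kt]; ring
  rw [Finset.sum_congr rfl fun m _ => h m]
  simp only [Finset.sum_add_distrib, Finset.sum_sub_distrib, ← Finset.mul_sum]
  rw [hx, sum_del_diag, sum_del_left i x, sum_del_left j x,
    sum_del_left j (fun m => del d i m)]
  ring

lemma M_ij (x y : Fin d → ℝ) (hx : ∑ i, x i * x i = 1) :
    ∑ i, ∑ j, ∑ k, ∑ l, del d i j * (Kt d x i j k l * (y k * y l)) = 0 := by
  have h1 : ∀ i : Fin d, ∑ j, ∑ k, ∑ l, del d i j * (Kt d x i j k l * (y k * y l))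
      = ∑ k, ∑ l, Kt d x i i k l * (y k * y l) := by
    intro i
    simp only [← Finset.mul_sum]
    exact sum_del_left i _
  rw [Finset.sum_congr rfl fun i _ => h1 i, Finset.sum_comm]
  rw [Finset.sum_congr rfl fun k _ => Finset.sum_comm]
  simp only [← Finset.sum_mul]
  simp [tr12 x hx]

lemma M_ik (x y : Fin d → ℝ) (hx : ∑ i, x i * x i = 1) :
    ∑ i, ∑ j, ∑ k, ∑ l, del d i k * (Kt d x i j k l * (y j * y l)) = 0 := by
  have h1 : ∀ i : Fin d, ∑ j, ∑ k, ∑ l, del d i k * (Kt d x i j k l * (y j * y l))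
      = ∑ j, ∑ l, Kt d x i j i l * (y j * y l) := by
    intro i
    rw [Finset.sum_comm]
    simp only [← Finset.mul_sum]
    exact sum_del_left i _
  rw [Finset.sum_congr rfl fun i _ => h1 i, Finset.sum_comm]
  rw [Finset.sum_congr rfl fun j _ => Finset.sum_comm]
  simp only [← Finset.sum_mul]
  simp [tr13 x hx]

lemma M_il (x y : Fin d → ℝ) (hx : ∑ i, x i * x i = 1) :
    ∑ i, ∑ j, ∑ k, ∑ l, del d i l * (Kt d x i j k l * (y j * y k)) = 0 := by
  have h1 : ∀ i : Fin d, ∑ j, ∑ k, ∑ l, del d i l * (Kt d x i j k l * (y j * y k))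
      = ∑ j, ∑ k, Kt d x i j k i * (y j * y k) := by
    intro i
    rw [Finset.sum_congr rfl fun j _ => Finset.sum_comm, Finset.sum_comm]
    simp only [← Finset.mul_sum]
    exact sum_del_left i _
  rw [Finset.sum_congr rfl fun i _ => h1 i, Finset.sum_comm]
  rw [Finset.sum_congr rfl fun j _ => Finset.sum_comm]
  simp only [← Finset.sum_mul]
  simp [tr14 x hx]

lemma M_jk (x y : Fin d → ℝ) (hx : ∑ i, x i * x i = 1) :
    ∑ i, ∑ j, ∑ k, ∑ l, del d j k * (Kt d x i j k l * (y i * y l)) = 0 := by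
  have h1 : ∀ i j : Fin d, ∑ k, ∑ l, del d j k * (Kt d x i j k l * (y i * y l))
      = ∑ l, Kt d x i j j l * (y i * y l) := by
    intro i j
    simp only [← Finset.mul_sum]
    exact sum_del_left j _
  rw [Finset.sum_congr rfl fun i _ => Finset.sum_congr rfl fun j _ => h1 i j]
  rw [Finset.sum_congr rfl fun i _ => Finset.sum_comm]
  simp only [← Finset.sum_mul]
  simp [tr23 x hx]

lemma M_jl (x y : Fin d → ℝ) (hx : ∑ i, x i * x i = 1) :
    ∑ i, ∑ j, ∑ k, ∑ l, del d j l * (Kt d x i j k l * (y i * y k)) = 0 := by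
  have h1 : ∀ i j : Fin d, ∑ k, ∑ l, del d j l * (Kt d x i j k l * (y i * y k))
      = ∑ k, Kt d x i j k j * (y i * y k) := by
    intro i j
    rw [Finset.sum_comm]
    simp only [← Finset.mul_sum]
    exact sum_del_left j _
  rw [Finset.sum_congr rfl fun i _ => Finset.sum_congr rfl fun j _ => h1 i j]
  rw [Finset.sum_congr rfl fun i _ => Finset.sum_comm]
  simp only [← Finset.sum_mul]
  simp [tr24 x hx]

lemma M_kl (x y : Fin d → ℝ) (hx : ∑ i, x i * x i = 1) :
    ∑ i, ∑ j, ∑ k, ∑ l, del d k l * (Kt d x i j k l * (y i * y j)) = 0 := by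
  have h1 : ∀ i j k : Fin d, ∑ l, del d k l * (Kt d x i j k l * (y i * y j))
      = Kt d x i j k k * (y i * y j) := fun i j k => sum_del_left k _
  rw [Finset.sum_congr rfl fun i _ => Finset.sum_congr rfl fun j _ =>
    Finset.sum_congr rfl fun k _ => h1 i j k]
  simp only [← Finset.sum_mul]
  simp [tr34 x hx]

lemma D_12_34 (x : Fin d → ℝ) (hx : ∑ i, x i * x i = 1) :
    ∑ i, ∑ j, ∑ k, ∑ l, del d i j * (del d k l * Kt d x i j k l) = 0 := by
  simp only [← Finset.mul_sum, sum_del_left]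
  rw [Finset.sum_comm]
  simp [tr12 x hx]

lemma D_13_24 (x : Fin d → ℝ) (hx : ∑ i, x i * x i = 1) :
    ∑ i, ∑ j, ∑ k, ∑ l, del d i k * (del d j l * Kt d x i j k l) = 0 := by
  simp only [← Finset.mul_sum, sum_del_left]
  rw [Finset.sum_comm]
  simp [tr13 x hx]

lemma D_14_23 (x : Fin d → ℝ) (hx : ∑ i, x i * x i = 1) :
    ∑ i, ∑ j, ∑ k, ∑ l, del d j k * (del d i l * Kt d x i j k l) = 0 := by
  simp only [← Finset.mul_sum, sum_del_left]
  rw [Finset.sum_comm]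
  simp [tr14 x hx]

lemma M0 (x y : Fin d → ℝ) (hy : ∑ i, y i * y i = 1) :
    ∑ i, ∑ j, ∑ k, ∑ l, Kt d x i j k l * (y i * y j * y k * y l)
      = ((d:ℝ)+2)*((d:ℝ)+4)*(∑ i, x i * y i)^4
        - 6*((d:ℝ)+2)*(∑ i, x i * y i)^2 + 3 := by
  have h : ∀ i j k l, Kt d x i j k l * (y i * y j * y k * y l) =
      ((d:ℝ)+2)*((d:ℝ)+4) * ((x i * y i) * (x j * y j) * (x k * y k) * (x l * y l))
      - ((d:ℝ)+2) * ((y i * (del d i j * y j)) * ((x k * y k) * (x l * y l)))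
      - ((d:ℝ)+2) * ((y i * (del d i k * y k)) * ((x j * y j) * (x l * y l)))
      - ((d:ℝ)+2) * ((y i * (del d i l * y l)) * ((x j * y j) * (x k * y k)))
      - ((d:ℝ)+2) * ((y j * (del d j k * y k)) * ((x i * y i) * (x l * y l)))
      - ((d:ℝ)+2) * ((y j * (del d j l * y l)) * ((x i * y i) * (x k * y k)))
      - ((d:ℝ)+2) * ((y k * (del d k l * y l)) * ((x i * y i) * (x j * y j)))
      + (y i * (del d i j * y j)) * (y k * (del d k l * y l))
      + (y i * (del d i k * y k)) * (y j * (del d j l * y l))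
      + (y i * (del d i l * y l)) * (y j * (del d j k * y k)) := by
    intro i j k l; simp only [Kt]; ring
  simp only [h, Finset.sum_add_distrib, Finset.sum_sub_distrib, sum4_const]
  simp only [F4, G_ij, G_ik, G_il, G_jk, G_jl, G_kl, H_12_34, H_13_24, H_14_23, pairsum]
  rw [hy]
  ring

lemma Kt_contract (x y : Fin d → ℝ) (hx : ∑ i, x i * x i = 1)
    (hy : ∑ i, y i * y i = 1) :
    ∑ i, ∑ j, ∑ k, ∑ l, Kt d x i j k l * Kt d y i j k l
      = ((d:ℝ)+2)*((d:ℝ)+4) *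
        (((d:ℝ)+2)*((d:ℝ)+4)*(∑ i, x i * y i)^4
          - 6*((d:ℝ)+2)*(∑ i, x i * y i)^2 + 3) := by
  have h : ∀ i j k l, Kt d x i j k l * Kt d y i j k l =
      ((d:ℝ)+2)*((d:ℝ)+4) * (Kt d x i j k l * (y i * y j * y k * y l))
      - ((d:ℝ)+2) * (del d i j * (Kt d x i j k l * (y k * y l)))
      - ((d:ℝ)+2) * (del d i k * (Kt d x i j k l * (y j * y l)))
      - ((d:ℝ)+2) * (del d i l * (Kt d x i j k l * (y j * y k)))
      - ((d:ℝ)+2) * (del d j k * (Kt d x i j k l * (y i * y l)))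
      - ((d:ℝ)+2) * (del d j l * (Kt d x i j k l * (y i * y k)))
      - ((d:ℝ)+2) * (del d k l * (Kt d x i j k l * (y i * y j)))
      + del d i j * (del d k l * Kt d x i j k l)
      + del d i k * (del d j l * Kt d x i j k l)
      + del d j k * (del d i l * Kt d x i j k l) := by
    intro i j k l; simp only [Kt]; ring
  simp only [h, Finset.sum_add_distrib, Finset.sum_sub_distrib, sum4_const]
  rw [M0 x y hy, M_ij x y hx, M_ik x y hx, M_il x y hx, M_jk x y hx, M_jl x y hx,
    M_kl x y hx, D_12_34 x hx, D_13_24 x hx, D_14_23 x hx]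
  ring

lemma F2 (f g : Fin d → ℝ) :
    ∑ i, ∑ j, f i * g j = (∑ i, f i) * (∑ j, g j) := by
  simp only [← Finset.mul_sum, ← Finset.sum_mul]

lemma sum2_const (c : ℝ) (F : Fin d → Fin d → ℝ) :
    ∑ i, ∑ j, c * F i j = c * ∑ i, ∑ j, F i j := by
  simp only [← Finset.mul_sum]

lemma dd_sum : ∑ i : Fin d, ∑ j, del d i j * del d i j = d := by
  have : ∀ i : Fin d, ∑ j, del d i j * del d i j = 1 := by
    intro i
    rw [sum_del_left i (fun j => del d i j)]
    simp [del]
  rw [Finset.sum_congr rfl fun i _ => this i]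
  simp

def Lt (d : ℕ) (x : Fin d → ℝ) (i j : Fin d) : ℝ := (d:ℝ) * (x i * x j) - del d i j

lemma Lt_contract (x y : Fin d → ℝ) (hx : ∑ i, x i * x i = 1)
    (hy : ∑ i, y i * y i = 1) :
    ∑ i, ∑ j, Lt d x i j * Lt d y i j
      = (d:ℝ) * ((d:ℝ)*(∑ i, x i * y i)^2 - 1) := by
  have h : ∀ i j, Lt d x i j * Lt d y i j =
      ((d:ℝ)*(d:ℝ)) * ((x i * y i) * (x j * y j))
      - (d:ℝ) * (x i * (del d i j * x j))
      - (d:ℝ) * (y i * (del d i j * y j))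
      + del d i j * del d i j := by
    intro i j; simp only [Lt]; ring
  simp only [h, Finset.sum_add_distrib, Finset.sum_sub_distrib, sum2_const]
  rw [F2, pairsum x x, pairsum y y, dd_sum, hx, hy]
  ring

lemma sum_sq_expand {ι κ : Type*} [Fintype κ] (s : Finset ι) (f : ι → κ → ℝ) :
    ∑ x ∈ s, ∑ y ∈ s, ∑ p, f x p * f y p = ∑ p, (∑ x ∈ s, f x p)^2 := by
  calc ∑ x ∈ s, ∑ y ∈ s, ∑ p, f x p * f y p
      = ∑ x ∈ s, ∑ p, ∑ y ∈ s, f x p * f y p :=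
        Finset.sum_congr rfl fun x _ => Finset.sum_comm
    _ = ∑ p, ∑ x ∈ s, ∑ y ∈ s, f x p * f y p := Finset.sum_comm
    _ = ∑ p, (∑ x ∈ s, f x p)^2 := by
        refine Finset.sum_congr rfl fun p _ => ?_
        rw [sq, Finset.sum_mul_sum]

lemma geg4 (X : Finset (Fin d → ℝ)) (hX : ∀ x ∈ X, ∑ i, x i * x i = 1) :
    0 ≤ ∑ x ∈ X, ∑ y ∈ X,
      (((d:ℝ)+2)*((d:ℝ)+4)*(∑ i, x i * y i)^4 - 6*((d:ℝ)+2)*(∑ i, x i * y i)^2 + 3) := by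
  have h1 : ∀ x ∈ X, ∀ y ∈ X,
      ∑ p : Fin d × Fin d × Fin d × Fin d,
        Kt d x p.1 p.2.1 p.2.2.1 p.2.2.2 * Kt d y p.1 p.2.1 p.2.2.1 p.2.2.2
      = ((d:ℝ)+2)*((d:ℝ)+4) *
        (((d:ℝ)+2)*((d:ℝ)+4)*(∑ i, x i * y i)^4 - 6*((d:ℝ)+2)*(∑ i, x i * y i)^2 + 3) := by
    intro x hx y hy
    rw [Fintype.sum_prod_type]
    simp only [Fintype.sum_prod_type]
    exact Kt_contract x y (hX x hx) (hX y hy)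
  have h2 : 0 ≤ ∑ p : Fin d × Fin d × Fin d × Fin d,
      (∑ x ∈ X, Kt d x p.1 p.2.1 p.2.2.1 p.2.2.2)^2 :=
    Finset.sum_nonneg fun p _ => sq_nonneg _
  have h4 : ∑ x ∈ X, ∑ y ∈ X, (∑ p : Fin d × Fin d × Fin d × Fin d,
      Kt d x p.1 p.2.1 p.2.2.1 p.2.2.2 * Kt d y p.1 p.2.1 p.2.2.1 p.2.2.2)
      = ∑ p : Fin d × Fin d × Fin d × Fin d,
        (∑ x ∈ X, Kt d x p.1 p.2.1 p.2.2.1 p.2.2.2)^2 :=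
    sum_sq_expand X _
  rw [← h4] at h2
  rw [Finset.sum_congr rfl fun x hx => Finset.sum_congr rfl fun y hy => h1 x hx y hy] at h2
  have h3 : ∑ x ∈ X, ∑ y ∈ X, ((d:ℝ)+2)*((d:ℝ)+4) *
        (((d:ℝ)+2)*((d:ℝ)+4)*(∑ i, x i * y i)^4 - 6*((d:ℝ)+2)*(∑ i, x i * y i)^2 + 3)
      = ((d:ℝ)+2)*((d:ℝ)+4) * ∑ x ∈ X, ∑ y ∈ X,
        (((d:ℝ)+2)*((d:ℝ)+4)*(∑ i, x i * y i)^4 - 6*((d:ℝ)+2)*(∑ i, x i * y i)^2 + 3) := by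
    simp only [← Finset.mul_sum]
  rw [h3] at h2
  have hApos : (0:ℝ) < ((d:ℝ)+2)*((d:ℝ)+4) := by positivity
  refine le_of_mul_le_mul_left ?_ hApos
  linarith

lemma geg2 (X : Finset (Fin d → ℝ)) (hX : ∀ x ∈ X, ∑ i, x i * x i = 1) :
    0 ≤ ∑ x ∈ X, ∑ y ∈ X, ((d:ℝ) * ((d:ℝ)*(∑ i, x i * y i)^2 - 1)) := by
  have h1 : ∀ x ∈ X, ∀ y ∈ X,
      ∑ p : Fin d × Fin d, Lt d x p.1 p.2 * Lt d y p.1 p.2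
      = (d:ℝ) * ((d:ℝ)*(∑ i, x i * y i)^2 - 1) := by
    intro x hx y hy
    rw [Fintype.sum_prod_type]
    exact Lt_contract x y (hX x hx) (hX y hy)
  have h2 : 0 ≤ ∑ p : Fin d × Fin d, (∑ x ∈ X, Lt d x p.1 p.2)^2 :=
    Finset.sum_nonneg fun p _ => sq_nonneg _
  have h4 : ∑ x ∈ X, ∑ y ∈ X, (∑ p : Fin d × Fin d, Lt d x p.1 p.2 * Lt d y p.1 p.2)
      = ∑ p : Fin d × Fin d, (∑ x ∈ X, Lt d x p.1 p.2)^2 :=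
    sum_sq_expand X _
  rw [← h4] at h2
  rw [Finset.sum_congr rfl fun x hx => Finset.sum_congr rfl fun y hy => h1 x hx y hy] at h2
  exact h2

theorem three_distance_bound_Hadamard1 (d : ℕ) (hd : 2 ≤ d) (α : ℝ)
    (hα0 : 0 < α) (hα1 : α < 1) (X : Finset (Fin d → ℝ))
    (hX : ∀ x ∈ X, dotR x x = 1)
    (hA : ∀ x ∈ X, ∀ y ∈ X, x ≠ y →
      dotR x y = α ∨ dotR x y = -α ∨ dotR x y = 0)
    (h1 : ((d : ℝ) + 4) * α ^ 2 ≤ 6) (h2 : ((d : ℝ) + 2) * α ^ 2 < 3) :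
    (X.card : ℝ) ≤ (d : ℝ) * ((d : ℝ) + 2) * (1 - α ^ 2) / (3 - ((d : ℝ) + 2) * α ^ 2) := by
  have hxx : ∀ x ∈ X, ∑ i, x i * x i = 1 := fun x hx => hX x hx
  have hd0 : (0:ℝ) < d := by
    have : 0 < d := by omega
    exact_mod_cast this
  have hpos : 0 < 3 - ((d:ℝ)+2)*α^2 := by linarith
  have hα2 : α^2 < 1 := by nlinarith
  -- counting identity
  have hcount : (∑ x ∈ X, ∑ y ∈ X, (dotR x y)^4)
      - α^2 * (∑ x ∈ X, ∑ y ∈ X, (dotR x y)^2) = (X.card:ℝ) * (1 - α^2) := by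
    have hc1 : ∀ x ∈ X, ∑ y ∈ X, ((dotR x y)^4 - α^2*(dotR x y)^2) = 1 - α^2 := by
      intro x hx
      rw [Finset.sum_eq_single_of_mem x hx]
      · rw [hX x hx]; ring
      · intro y hy hne
        rcases hA x hx y hy (Ne.symm hne) with h | h | h <;> rw [h] <;> ring
    have hc2 : ∑ x ∈ X, ∑ y ∈ X, ((dotR x y)^4 - α^2*(dotR x y)^2)
        = (X.card:ℝ) * (1-α^2) := by
      rw [Finset.sum_congr rfl hc1, Finset.sum_const, nsmul_eq_mul]
    rw [← hc2]
    simp only [Finset.sum_sub_distrib, ← Finset.mul_sum]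
  -- Gegenbauer degree 4
  have hG4 := geg4 X hxx
  have e1 : ∑ x ∈ X, ∑ y ∈ X, (((d:ℝ)+2)*((d:ℝ)+4)*(∑ i, x i * y i)^4
        - 6*((d:ℝ)+2)*(∑ i, x i * y i)^2 + 3)
      = ((d:ℝ)+2)*((d:ℝ)+4) * (∑ x ∈ X, ∑ y ∈ X, (dotR x y)^4)
        - 6*((d:ℝ)+2) * (∑ x ∈ X, ∑ y ∈ X, (dotR x y)^2) + 3 * (X.card:ℝ)^2 := by
    simp only [dotR, Finset.sum_add_distrib, Finset.sum_sub_distrib, ← Finset.mul_sum,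
      Finset.sum_const, nsmul_eq_mul]
    ring
  rw [e1] at hG4
  -- Gegenbauer degree 2
  have hG2 := geg2 X hxx
  have e2 : ∑ x ∈ X, ∑ y ∈ X, ((d:ℝ) * ((d:ℝ)*(∑ i, x i * y i)^2 - 1))
      = (d:ℝ)*(d:ℝ) * (∑ x ∈ X, ∑ y ∈ X, (dotR x y)^2) - (d:ℝ) * (X.card:ℝ)^2 := by
    simp only [dotR, Finset.sum_add_distrib, Finset.sum_sub_distrib, ← Finset.mul_sum,
      Finset.sum_const, nsmul_eq_mul]
    ring
  rw [e2] at hG2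
  have hS2' : 0 ≤ (d:ℝ) * (∑ x ∈ X, ∑ y ∈ X, (dotR x y)^2) - (X.card:ℝ)^2 := by
    nlinarith [hG2, hd0]
  rw [le_div_iff₀ hpos]
  rcases Nat.eq_zero_or_pos X.card with h0 | hpos'
  · rw [h0]
    push_cast
    nlinarith [hd0, hα2]
  · have hn1 : (1:ℝ) ≤ (X.card:ℝ) := by exact_mod_cast hpos'
    have hc2 : (d:ℝ)*((d:ℝ)+2)*((d:ℝ)+4)*((∑ x ∈ X, ∑ y ∈ X, (dotR x y)^4)
          - α^2 * (∑ x ∈ X, ∑ y ∈ X, (dotR x y)^2))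
        = (d:ℝ)*((d:ℝ)+2)*((d:ℝ)+4)*((X.card:ℝ)*(1-α^2)) := by rw [hcount]
    have hdG : 0 ≤ (d:ℝ) * (((d:ℝ)+2)*((d:ℝ)+4) * (∑ x ∈ X, ∑ y ∈ X, (dotR x y)^4)
        - 6*((d:ℝ)+2) * (∑ x ∈ X, ∑ y ∈ X, (dotR x y)^2) + 3 * (X.card:ℝ)^2) :=
      mul_nonneg hd0.le hG4
    have hprod2 : 0 ≤ ((d:ℝ)+2) * ((6 - ((d:ℝ)+4)*α^2) *
        ((d:ℝ) * (∑ x ∈ X, ∑ y ∈ X, (dotR x y)^2) - (X.card:ℝ)^2)) :=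
      mul_nonneg (by positivity) (mul_nonneg (by linarith) hS2')
    have K1 : 0 ≤ (d:ℝ)*((d:ℝ)+2)*((d:ℝ)+4)*((X.card:ℝ)*(1-α^2))
        - (X.card:ℝ)^2*((d:ℝ)+4)*(3-((d:ℝ)+2)*α^2) := by
      nlinarith [hc2, hdG, hprod2]
    nlinarith [K1, hn1, hpos, mul_pos (show (0:ℝ) < (X.card:ℝ) by linarith)
      (show (0:ℝ) < (d:ℝ)+4 by linarith)]
end

section
/- Let H₁, …, H_f be Hadamard matrices of order 16 such that for all i ≠ j, (1/8)·H_i H_jᵀ is a weighing matrix of order 16 and weight 4 (i.e., the H_i are mutually quasi-unbiased for parameters (16, 4, 64)). Then f ≤ 15. -/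
open Finset Matrix
open scoped symmDiff

/-- A Hadamard matrix of order `d`: entries `±1` with `H * Hᵀ = d • I`. -/
def IsHadamard {d : ℕ} (H : Matrix (Fin d) (Fin d) ℝ) : Prop :=
  (∀ r c, H r c = 1 ∨ H r c = -1) ∧ H * Hᵀ = (d : ℝ) • 1

/-- A weighing matrix of order `d` and weight `l`: entries in `{0, 1, -1}`
with `W * Wᵀ = l • I`. -/
def IsWeighing {d : ℕ} (l : ℕ) (W : Matrix (Fin d) (Fin d) ℝ) : Prop :=
  (∀ r c, W r c = 0 ∨ W r c = 1 ∨ W r c = -1) ∧ W * Wᵀ = (l : ℝ) • 1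

section Aux

open Submodule

/-- The dot-product bilinear form on `Fin 16 → ZMod 2`. -/
noncomputable def dotForm : LinearMap.BilinForm (ZMod 2) (Fin 16 → ZMod 2) :=
  LinearMap.mk₂ (ZMod 2) (fun u v => ∑ c, u c * v c)
    (fun u u' v => by simp [add_mul, Finset.sum_add_distrib])
    (fun a u v => by simp [Finset.mul_sum, mul_assoc])
    (fun u v v' => by simp [mul_add, Finset.sum_add_distrib])
    (fun a u v => by
      simp only [Pi.smul_apply, smul_eq_mul, Finset.mul_sum]
      exact Finset.sum_congr rfl fun c _ => by ring)

lemma dotForm_apply (u v : Fin 16 → ZMod 2) : dotForm u v = ∑ c, u c * v c := rfl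

lemma dotForm_refl : dotForm.IsRefl := by
  intro u v h
  simpa [dotForm_apply, mul_comm] using h

lemma dotForm_nondeg : dotForm.Nondegenerate := by
  refine (LinearMap.IsRefl.nondegenerate_iff_separatingLeft dotForm_refl).2 ?_
  intro u hu
  funext c
  have := hu (Pi.single c 1)
  simp only [dotForm_apply, Pi.single_apply, mul_ite, mul_one, mul_zero] at this
  simpa [Finset.sum_ite_eq'] using this

lemma card_symmDiff_aux {α : Type*} [DecidableEq α] (s t : Finset α) :
    (s ∆ t).card + 2 * (s ∩ t).card = s.card + t.card := by
  have h1 : s ∆ t = (s ∪ t) \ (s ∩ t) := by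
    ext a
    simp only [Finset.mem_symmDiff, Finset.mem_sdiff, Finset.mem_union, Finset.mem_inter]
    tauto
  have h2 : (s ∩ t) ⊆ (s ∪ t) := (Finset.inter_subset_left).trans Finset.subset_union_left
  have h3 := Finset.card_inter_add_card_union s t
  have h4 : (s ∩ t).card ≤ (s ∪ t).card := Finset.card_le_card h2
  rw [h1, Finset.card_sdiff_of_subset h2]
  omega

/-- Core combinatorial lemma: a family of `16·f` vectors in `{±1}^16` whose
pairwise inner products are `0`, `8` or `-8` forces `f ≤ 15`. -/
lemma rows_bound (f : ℕ) (v : Fin f × Fin 16 → Fin 16 → ℝ)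
    (hpm : ∀ x c, v x c = 1 ∨ v x c = -1)
    (hin : ∀ x y, x ≠ y → (∑ c, v x c * v y c) = 0 ∨
      (∑ c, v x c * v y c) = 8 ∨ (∑ c, v x c * v y c) = -8) :
    f ≤ 15 := by
  classical
  by_contra hf15
  have hf : 16 ≤ f := by omega
  -- the disagreement set of two rows
  set A : Fin f × Fin 16 → Fin f × Fin 16 → Finset (Fin 16) :=
    fun x y => Finset.univ.filter (fun c => v x c ≠ v y c) with hA
  have hAcardle : ∀ x y, (A x y).card ≤ 16 := by
    intro x y
    simpa using Finset.card_filter_le Finset.univ (fun c => v x c ≠ v y c)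
  have sumEq : ∀ x y, (∑ c, v x c * v y c) = 16 - 2 * (A x y).card := by
    intro x y
    have h1 : ∀ c ∈ Finset.univ.filter (fun c => v x c ≠ v y c),
        v x c * v y c = -1 := by
      intro c hc
      simp only [Finset.mem_filter] at hc
      rcases hpm x c with h | h <;> rcases hpm y c with h' | h' <;>
        rw [h, h'] at hc ⊢ <;> revert hc <;> norm_num
    have h2 : ∀ c ∈ Finset.univ.filter (fun c => ¬ v x c ≠ v y c),
        v x c * v y c = 1 := by
      intro c hc
      simp only [Finset.mem_filter, not_not] at hc
      rcases hpm x c with h | h <;> rcases hpm y c with h' | h' <;>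
        rw [h, h'] at hc ⊢ <;> revert hc <;> norm_num
    have hle : (Finset.univ.filter (fun c => v x c ≠ v y c)).card ≤ 16 := by
      simpa using Finset.card_filter_le Finset.univ (fun c => v x c ≠ v y c)
    have hcompl : (Finset.univ.filter (fun c => ¬ v x c ≠ v y c)).card
        = 16 - (Finset.univ.filter (fun c => v x c ≠ v y c)).card := by
      rw [Finset.filter_not, Finset.card_sdiff_of_subset (Finset.filter_subset _ _)]
      simp
    simp only [hA]
    rw [← Finset.sum_filter_add_sum_filter_not Finset.univ (fun c => v x c ≠ v y c),
      Finset.sum_congr rfl h1, Finset.sum_congr rfl h2,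
      Finset.sum_const, Finset.sum_const, hcompl,
      nsmul_eq_mul, nsmul_eq_mul, Nat.cast_sub hle]
    push_cast
    ring
  have cardA0 : ∀ x y, (A x y).card = 0 ∨ (A x y).card = 4 ∨ (A x y).card = 8 ∨
      (A x y).card = 12 := by
    intro x y
    by_cases hxy : x = y
    · left
      subst hxy
      simp [hA]
    · have hs := sumEq x y
      have hreal : ((A x y).card : ℝ) = 4 ∨ ((A x y).card : ℝ) = 8 ∨
          ((A x y).card : ℝ) = 12 := by
        rcases hin x y hxy with h | h | h <;> rw [h] at hs
        · right; left; linarith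
        · left; linarith
        · right; right; linarith
      rcases hreal with h | h | h
      · right; left; exact_mod_cast h
      · right; right; left; exact_mod_cast h
      · right; right; right; exact_mod_cast h
  have cardAne : ∀ x y, x ≠ y → (A x y).card ≠ 16 := by
    intro x y hxy h16
    have hs := sumEq x y
    rw [h16] at hs
    rcases hin x y hxy with h | h | h <;> rw [h] at hs <;> norm_num at hs
  -- `A x y` is the symmetric difference of `A x z` and `A y z`
  have symmA : ∀ x y z, A x y = (A x z) ∆ (A y z) := by
    intro x y z
    ext c
    simp only [hA, Finset.mem_symmDiff, Finset.mem_filter, Finset.mem_univ, true_and]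
    rcases hpm x c with h1 | h1 <;> rcases hpm y c with h2 | h2 <;>
      rcases hpm z c with h3 | h3 <;> rw [h1, h2, h3] <;> norm_num
  have interEven : ∀ x y z, Even ((A x z ∩ A y z).card) := by
    intro x y z
    have h1 := cardA0 x z
    have h2 := cardA0 y z
    have h3 := cardA0 x y
    rw [symmA x y z] at h3
    have key := card_symmDiff_aux (A x z) (A y z)
    rw [Nat.even_iff]
    omega
  -- pass to ZMod 2
  set b : Fin f × Fin 16 → Fin 16 → ZMod 2 :=
    fun x c => if v x c = 1 then 0 else 1 with hb
  have addb : ∀ x y c, b x c + b y c = if c ∈ A x y then 1 else 0 := by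
    intro x y c
    simp only [hb, hA, Finset.mem_filter, Finset.mem_univ, true_and]
    rcases hpm x c with h1 | h1 <;> rcases hpm y c with h2 | h2 <;>
      rw [h1, h2] <;> norm_num <;> decide
  set x₀ : Fin f × Fin 16 := (⟨0, by omega⟩, 0) with hx₀
  set d : Fin f × Fin 16 → Fin 16 → ZMod 2 := fun x => b x + b x₀ with hd
  have evenCast : ∀ n : ℕ, Even n → (n : ZMod 2) = 0 := by
    intro n hn
    rw [Nat.even_iff] at hn
    rw [ZMod.natCast_eq_zero_iff]
    omega
  have cardSum : ∀ (s : Finset (Fin 16)),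
      (∑ c, if c ∈ s then (1 : ZMod 2) else 0) = (s.card : ZMod 2) := by
    intro s
    rw [← Finset.sum_filter]
    have hfs : Finset.univ.filter (fun c => c ∈ s) = s := by
      ext c; simp
    rw [hfs, Finset.sum_const]
    simp
  have dotd : ∀ x y, dotForm (d x) (d y) = 0 := by
    intro x y
    have heq : dotForm (d x) (d y)
        = ∑ c, if c ∈ A x x₀ ∩ A y x₀ then (1 : ZMod 2) else 0 := by
      rw [dotForm_apply]
      refine Finset.sum_congr rfl fun c _ => ?_
      have h1 := addb x x₀ c
      have h2 := addb y x₀ c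
      simp only [hd, Pi.add_apply]
      rw [h1, h2]
      by_cases p : c ∈ A x x₀ <;> by_cases q : c ∈ A y x₀ <;>
        simp [p, q, Finset.mem_inter]
    rw [heq, cardSum]
    exact evenCast _ (interEven x y x₀)
  have dotd1 : ∀ x, dotForm (d x) (fun _ => 1) = 0 := by
    intro x
    have heq : dotForm (d x) (fun _ => 1)
        = ∑ c, if c ∈ A x x₀ then (1 : ZMod 2) else 0 := by
      rw [dotForm_apply]
      refine Finset.sum_congr rfl fun c _ => ?_
      have h1 := addb x x₀ c
      simp only [hd, Pi.add_apply]
      rw [mul_one, h1]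
    rw [heq, cardSum]
    refine evenCast _ ?_
    rcases cardA0 x x₀ with h | h | h | h <;> rw [h] <;> decide
  -- the span of the translated rows
  set V : Submodule (ZMod 2) (Fin 16 → ZMod 2) :=
    Submodule.span (ZMod 2) (Set.range d) with hV
  have memV : ∀ x, d x ∈ V := fun x =>
    Submodule.subset_span (Set.mem_range_self x)
  have horth : ∀ u ∈ V, ∀ w ∈ V, dotForm u w = 0 := by
    intro u hu w hw
    induction hu, hw using Submodule.span_induction₂ with
    | mem_mem u w hu hw =>
      obtain ⟨x, rfl⟩ := hu
      obtain ⟨y, rfl⟩ := hw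
      exact dotd x y
    | zero_left w hw => simp
    | zero_right u hu => simp
    | add_left u u' w hu hu' hw h h' => simp [map_add, LinearMap.add_apply, h, h']
    | add_right u w w' hu hw hw' h h' => simp [map_add, h, h']
    | smul_left r u w hu hw h => simp [_root_.map_smul, LinearMap.smul_apply, h]
    | smul_right r u w hu hw h => simp [_root_.map_smul, h]
  have hVle : V ≤ dotForm.orthogonal V := by
    intro u hu
    rw [LinearMap.BilinForm.mem_orthogonal_iff]
    intro n hn
    exact horth n hn u hu
  -- dimension count
  have hfr16 : Module.finrank (ZMod 2) (Fin 16 → ZMod 2) = 16 := by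
    simp [Module.finrank_fintype_fun_eq_card]
  have hfrO : Module.finrank (ZMod 2) (dotForm.orthogonal V)
      = 16 - Module.finrank (ZMod 2) V := by
    have h := LinearMap.BilinForm.finrank_orthogonal dotForm_nondeg V
    rwa [hfr16] at h
  have hVle8 : Module.finrank (ZMod 2) V ≤ 8 := by
    have h1 : Module.finrank (ZMod 2) V
        ≤ Module.finrank (ZMod 2) (dotForm.orthogonal V) :=
      Submodule.finrank_mono hVle
    have h2 : Module.finrank (ZMod 2) V
        ≤ Module.finrank (ZMod 2) (Fin 16 → ZMod 2) :=
      Submodule.finrank_le V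
    omega
  haveI : Fintype V := Fintype.ofFinite V
  have hcardV : Fintype.card V = 2 ^ Module.finrank (ZMod 2) V := by
    have := Module.card_eq_pow_finrank (K := ZMod 2) (V := V)
    simpa [ZMod.card] using this
  -- the rows, as elements of V
  set dV : Fin f × Fin 16 → V := fun x => ⟨d x, memV x⟩ with hdV
  have hdinj : Function.Injective dV := by
    intro x y hxy
    by_contra hne
    have hde : d x = d y := congrArg Subtype.val hxy
    have hbe : ∀ c, b x c = b y c := by
      intro c
      have := congrFun hde c
      simp only [hd, Pi.add_apply] at this
      exact add_right_cancel this
    have hve : ∀ c, v x c = v y c := by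
      intro c
      have h0 := hbe c
      simp only [hb] at h0
      rcases hpm x c with h1 | h1 <;> rcases hpm y c with h2 | h2
      · exact h1.trans h2.symm
      · rw [h1, h2, if_pos rfl, if_neg (by norm_num)] at h0
        exact absurd h0 (by decide)
      · rw [h1, h2, if_neg (by norm_num), if_pos rfl] at h0
        exact absurd h0 (by decide)
      · exact h1.trans h2.symm
    have hAe : A x y = ∅ := by
      simp only [hA]
      exact Finset.filter_eq_empty_iff.mpr (fun c _ => by simp [hve c])
    have hs := sumEq x y
    rw [hAe] at hs
    simp only [Finset.card_empty, Nat.cast_zero] at hs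
    rcases hin x y hne with h | h | h <;> rw [h] at hs <;> norm_num at hs
  have hcardle : f * 16 ≤ 2 ^ Module.finrank (ZMod 2) V := by
    have := Fintype.card_le_of_injective dV hdinj
    rwa [Fintype.card_prod, Fintype.card_fin, Fintype.card_fin, hcardV] at this
  have hfr8 : Module.finrank (ZMod 2) V = 8 := by
    by_contra h
    have hlt : Module.finrank (ZMod 2) V ≤ 7 := by omega
    have h2 : 2 ^ Module.finrank (ZMod 2) V ≤ 2 ^ 7 :=
      Nat.pow_le_pow_right (by norm_num) hlt
    have : (2:ℕ) ^ 7 = 128 := by norm_num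
    omega
  have hf16 : f = 16 := by
    have h2 : 2 ^ Module.finrank (ZMod 2) V = 256 := by rw [hfr8]; norm_num
    omega
  -- `V` equals its own orthogonal complement, hence contains the all-ones vector
  have hVeq : V = dotForm.orthogonal V := by
    refine Submodule.eq_of_le_of_finrank_le hVle ?_
    rw [hfrO, hfr8]
  have hone : (fun _ => (1 : ZMod 2)) ∈ V := by
    rw [hVeq, LinearMap.BilinForm.mem_orthogonal_iff]
    intro n hn
    induction hn using Submodule.span_induction with
    | mem u hu =>
      obtain ⟨x, rfl⟩ := hu
      exact dotd1 x
    | zero => simp [LinearMap.BilinForm.IsOrtho]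
    | add u w hu hw h1 h2 =>
      have h1' : dotForm u (fun _ => 1) = 0 := h1
      have h2' : dotForm w (fun _ => 1) = 0 := h2
      show dotForm (u + w) (fun _ => 1) = 0
      rw [map_add, LinearMap.add_apply, h1', h2', add_zero]
    | smul r u hu h =>
      have h' : dotForm u (fun _ => 1) = 0 := h
      show dotForm (r • u) (fun _ => 1) = 0
      rw [_root_.map_smul, LinearMap.smul_apply, h', smul_zero]
  -- surjectivity of `dV`
  have hbij : Function.Bijective dV := by
    rw [Fintype.bijective_iff_injective_and_card]
    refine ⟨hdinj, ?_⟩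
    rw [Fintype.card_prod, Fintype.card_fin, Fintype.card_fin, hcardV, hfr8, hf16]
    norm_num
  obtain ⟨x, hx⟩ := hbij.2 ⟨(fun _ => 1), hone⟩
  have hdx : d x = fun _ => 1 := congrArg Subtype.val hx
  have hxne : x ≠ x₀ := by
    intro h
    have h0 := congrFun hdx 0
    rw [h] at h0
    simp only [hd, Pi.add_apply] at h0
    have hself : ∀ a : ZMod 2, a + a = 0 := by decide
    rw [hself] at h0
    exact zero_ne_one h0
  have hA16 : A x x₀ = Finset.univ := by
    ext c
    simp only [Finset.mem_univ, iff_true]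
    have h1 := addb x x₀ c
    have h2 : d x c = 1 := congrFun hdx c
    simp only [hd, Pi.add_apply] at h2
    rw [h2] at h1
    by_contra hc
    rw [if_neg hc] at h1
    exact one_ne_zero h1
  have := cardAne x x₀ hxne
  rw [hA16] at this
  simp at this

end Aux

theorem quasi_unbiased_bound_12 (f : ℕ)
    (H : Fin f → Matrix (Fin 16) (Fin 16) ℝ)
    (hHad : ∀ i, _root_.IsHadamard (H i))
    (hQU : ∀ i j, i ≠ j →
      IsWeighing 4 (((1 : ℝ) / 8) • (H i * (H j)ᵀ))) :
    f ≤ 15 := by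
  apply rows_bound f (fun x c => H x.1 x.2 c)
  · intro x c
    exact (hHad x.1).1 x.2 c
  · rintro ⟨i, r⟩ ⟨j, s⟩ hxy
    have hentry : (∑ c, H i r c * H j s c) = (H i * (H j)ᵀ) r s := by
      rw [Matrix.mul_apply]
      simp [Matrix.transpose_apply]
    by_cases hij : i = j
    · subst hij
      have hrs : r ≠ s := by
        simpa using hxy
      left
      simp only []
      rw [hentry, (hHad i).2]
      simp [Matrix.one_apply_ne hrs]
    · have hw := (hQU i j hij).1 r s
      simp only [Matrix.smul_apply, smul_eq_mul] at hw
      simp only []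
      rw [hentry]
      rcases hw with h | h | h
      · left; linarith
      · right; left; linarith
      · right; right; linarith
end

section
/- Let H₁, …, H_f be Hadamard matrices of order 24 such that for all i ≠ j, (1/12)·H_i H_jᵀ is a weighing matrix of order 24 and weight 4 (i.e., the H_i are mutually quasi-unbiased for parameters (24, 4, 144)). Then f ≤ 27. -/
open Finset Matrix

section Aux
open Polynomial

lemma coeff_one_sub_X_pow (b j : ℕ) :
    ((1 - X : ℝ[X]) ^ b).coeff j = (-1 : ℝ)^j * (b.choose j : ℝ) := by
  have h : (1 - X : ℝ[X]) = C (-1) * (X + C (-1)) := by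
    simp; ring
  rw [h, mul_pow, ← map_pow, coeff_C_mul, coeff_X_add_C_pow]
  rcases le_or_gt j b with hj | hj
  · have h2 : b + (b - j) = 2*(b-j) + j := by omega
    calc (-1 : ℝ)^b * ((-1)^(b-j) * (b.choose j : ℝ))
        = (-1 : ℝ)^(b + (b-j)) * (b.choose j : ℝ) := by rw [pow_add]; ring
      _ = (-1 : ℝ)^(2*(b-j)+j) * (b.choose j : ℝ) := by rw [h2]
      _ = (-1 : ℝ)^j * (b.choose j : ℝ) := by rw [pow_add, pow_mul]; norm_num
  · simp [Nat.choose_eq_zero_of_lt hj]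

lemma coeff6_val (a : ℕ) (ha : a = 24 ∨ a = 18 ∨ a = 12 ∨ a = 6) :
    (((1 + X : ℝ[X]) ^ a * (1 - X) ^ (24 - a)).coeff 6) =
      if a = 24 then 134596 else if a = 12 then -220 else -1076 := by
  rw [coeff_mul, Finset.Nat.sum_antidiagonal_eq_sum_range_succ_mk]
  simp only [coeff_one_add_X_pow, coeff_one_sub_X_pow]
  rcases ha with rfl | rfl | rfl | rfl <;>
    norm_num [Finset.sum_range_succ] <;>
    norm_num [Nat.choose]

lemma G_eq_coeff (w : Fin 24 → ℝ) (hw : ∀ c, w c = 1 ∨ w c = -1) :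
    ∑ S ∈ (univ : Finset (Fin 24)).powersetCard 6, ∏ c ∈ S, w c
      = (((1 + X : ℝ[X]) ^ (univ.filter (fun c => w c = 1)).card
          * (1 - X) ^ (24 - (univ.filter (fun c => w c = 1)).card)).coeff 6) := by
  classical
  set A : Finset (Fin 24) := univ.filter (fun c => w c = 1) with hA
  have hprod : ∏ c : Fin 24, (C (w c) * X + 1) = (1 + X : ℝ[X]) ^ A.card * (1 - X) ^ (24 - A.card) := by
    rw [← Finset.prod_mul_prod_compl A (fun c => C (w c) * X + 1)]
    have h1 : ∏ c ∈ A, (C (w c) * X + 1) = (1 + X : ℝ[X]) ^ A.card := by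
      rw [Finset.prod_congr rfl (fun c hc => ?_), Finset.prod_const]
      have : w c = 1 := (Finset.mem_filter.mp hc).2
      rw [this]; simp [add_comm]
    have h2 : ∏ c ∈ Aᶜ, (C (w c) * X + 1) = (1 - X : ℝ[X]) ^ (24 - A.card) := by
      have hcard : Aᶜ.card = 24 - A.card := by
        rw [Finset.card_compl]; simp
      rw [Finset.prod_congr rfl (fun c hc => ?_), Finset.prod_const, hcard]
      have hc' : w c ≠ 1 := by
        simp only [A, Finset.mem_compl, Finset.mem_filter, Finset.mem_univ, true_and] at hc
        exact hc
      have : w c = -1 := (hw c).resolve_left hc'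
      rw [this]; simp [sub_eq_add_neg, add_comm]
    rw [h1, h2]
  rw [← hprod]
  rw [Finset.prod_add]
  simp only [Finset.prod_const_one, mul_one]
  rw [finset_sum_coeff]
  have hterm : ∀ t ∈ (univ : Finset (Fin 24)).powerset,
      (∏ c ∈ t, (C (w c) * X)).coeff 6 = if t.card = 6 then ∏ c ∈ t, w c else 0 := by
    intro t _
    rw [Finset.prod_mul_distrib, Finset.prod_const, ← map_prod, coeff_C_mul, coeff_X_pow]
    by_cases h : t.card = 6
    · simp [h]
    · rw [if_neg (show ¬ 6 = #t from fun hh => h hh.symm), mul_zero, if_neg h]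
  rw [Finset.sum_congr rfl hterm, Finset.sum_ite, Finset.sum_const, Finset.powersetCard_eq_filter]
  simp

lemma sum_pm (w : Fin 24 → ℝ) (hw : ∀ c, w c = 1 ∨ w c = -1) :
    ∑ c, w c = 2 * ((univ.filter (fun c => w c = 1)).card : ℝ) - 24 := by
  classical
  set A : Finset (Fin 24) := univ.filter (fun c => w c = 1) with hA
  rw [← Finset.sum_add_sum_compl A w]
  have h1 : ∑ c ∈ A, w c = (A.card : ℝ) := by
    rw [Finset.sum_congr rfl (fun c hc => (Finset.mem_filter.mp hc).2), Finset.sum_const]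
    simp
    rfl
  have hcompl : ∀ c ∈ Aᶜ, w c = -1 := by
    intro c hc
    have hc' : w c ≠ 1 := by
      simp only [A, Finset.mem_compl, Finset.mem_filter, Finset.mem_univ, true_and] at hc
      exact hc
    exact (hw c).resolve_left hc'
  have h2 : ∑ c ∈ Aᶜ, w c = -((Aᶜ.card : ℝ)) := by
    rw [Finset.sum_congr rfl hcompl, Finset.sum_const]
    simp
  have h3 : (Aᶜ.card : ℝ) = 24 - A.card := by
    rw [Finset.card_compl]
    have hle := A.card_le_univ
    simp only [card_univ, Fintype.card_fin] at hle ⊢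
    rw [Nat.cast_sub hle]
    norm_num
  rw [h1, h2, h3]; ring

/-- main evaluation: cross pairs -/
lemma G_val_cross (w : Fin 24 → ℝ) (hw : ∀ c, w c = 1 ∨ w c = -1)
    (he : ∑ c, w c = 0 ∨ ∑ c, w c = 12 ∨ ∑ c, w c = -12) :
    ∑ S ∈ (univ : Finset (Fin 24)).powersetCard 6, ∏ c ∈ S, w c
      = -220 - 856 * ((∑ c, w c)/12)^2 := by
  classical
  have hs := sum_pm w hw
  set a := (univ.filter (fun c => w c = 1)).card with ha
  rw [G_eq_coeff w hw, ← ha]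
  rcases he with he | he | he
  · have ha' : a = 12 := by
      rw [he] at hs
      have : (a:ℝ) = 12 := by linarith
      exact_mod_cast this
    rw [ha', coeff6_val 12 (by norm_num), he]
    norm_num
  · have ha' : a = 18 := by
      rw [he] at hs
      have : (a:ℝ) = 18 := by linarith
      exact_mod_cast this
    rw [ha', coeff6_val 18 (by norm_num), he]
    norm_num
  · have ha' : a = 6 := by
      rw [he] at hs
      have : (a:ℝ) = 6 := by linarith
      exact_mod_cast this
    rw [ha', coeff6_val 6 (by norm_num), he]
    norm_num

/-- main evaluation: identical rows -/
lemma G_val_diag (w : Fin 24 → ℝ) (hw : ∀ c, w c = 1 ∨ w c = -1)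
    (he : ∑ c, w c = 24) :
    ∑ S ∈ (univ : Finset (Fin 24)).powersetCard 6, ∏ c ∈ S, w c = 134596 := by
  classical
  have hs := sum_pm w hw
  set a := (univ.filter (fun c => w c = 1)).card with ha
  rw [G_eq_coeff w hw, ← ha]
  have ha' : a = 24 := by
    rw [he] at hs
    have : (a:ℝ) = 24 := by linarith
    exact_mod_cast this
  rw [ha', coeff6_val 24 (by norm_num)]
  norm_num

end Aux

open Polynomial in
theorem quasi_unbiased_bound_13 (f : ℕ)
    (H : Fin f → Matrix (Fin 24) (Fin 24) ℝ)
    (hHad : ∀ i, _root_.IsHadamard (H i))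
    (hQU : ∀ i j, i ≠ j →
      IsWeighing 4 (((1 : ℝ) / 12) • (H i * (H j)ᵀ))) :
    f ≤ 27 := by
  classical
  by_contra hf
  push_neg at hf
  have hf28 : (28 : ℝ) ≤ (f : ℝ) := by exact_mod_cast hf
  -- entries
  have hE : ∀ i r c, H i r c = 1 ∨ H i r c = -1 := fun i => (hHad i).1
  -- inner products within a matrix
  have hOrtho : ∀ i (r s : Fin 24), ∑ c, H i r c * H i s c = if r = s then 24 else 0 := by
    intro i r s
    have := congrFun (congrFun (hHad i).2 r) s
    simp only [Matrix.mul_apply, Matrix.transpose_apply, Matrix.smul_apply, Matrix.one_apply,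
      smul_eq_mul] at this
    rw [this]
    split <;> norm_num
  -- the big sum
  set E : Fin f → Fin 24 → Fin f → Fin 24 → ℝ := fun i r j s =>
    ∑ S ∈ (univ : Finset (Fin 24)).powersetCard 6, ∏ c ∈ S, (H i r c * H j s c) with hEdef
  have hT : (0:ℝ) ≤ ∑ S ∈ (univ : Finset (Fin 24)).powersetCard 6,
      (∑ p : Fin f × Fin 24, ∏ c ∈ S, H p.1 p.2 c)^2 :=
    Finset.sum_nonneg (fun S _ => sq_nonneg _)
  have hswap : ∑ S ∈ (univ : Finset (Fin 24)).powersetCard 6,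
      (∑ p : Fin f × Fin 24, ∏ c ∈ S, H p.1 p.2 c)^2
      = ∑ i, ∑ j, ∑ r, ∑ s, E i r j s := by
    have h1 : ∀ S ∈ (univ : Finset (Fin 24)).powersetCard 6,
        (∑ p : Fin f × Fin 24, ∏ c ∈ S, H p.1 p.2 c)^2
        = ∑ p : Fin f × Fin 24, ∑ q : Fin f × Fin 24,
            ∏ c ∈ S, (H p.1 p.2 c * H q.1 q.2 c) := by
      intro S _
      rw [sq, Finset.sum_mul_sum]
      exact Finset.sum_congr rfl (fun p _ => Finset.sum_congr rfl
        (fun q _ => (Finset.prod_mul_distrib).symm)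
      )
    calc ∑ S ∈ (univ : Finset (Fin 24)).powersetCard 6,
        (∑ p : Fin f × Fin 24, ∏ c ∈ S, H p.1 p.2 c)^2
        = ∑ S ∈ (univ : Finset (Fin 24)).powersetCard 6, ∑ p : Fin f × Fin 24,
            ∑ q : Fin f × Fin 24, ∏ c ∈ S, (H p.1 p.2 c * H q.1 q.2 c) :=
          Finset.sum_congr rfl h1
      _ = ∑ p : Fin f × Fin 24, ∑ S ∈ (univ : Finset (Fin 24)).powersetCard 6,
            ∑ q : Fin f × Fin 24, ∏ c ∈ S, (H p.1 p.2 c * H q.1 q.2 c) :=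
          Finset.sum_comm
      _ = ∑ p : Fin f × Fin 24, ∑ q : Fin f × Fin 24, E p.1 p.2 q.1 q.2 :=
          Finset.sum_congr rfl (fun p _ => Finset.sum_comm)
      _ = ∑ i, ∑ r, ∑ j, ∑ s, E i r j s := by
          rw [Fintype.sum_prod_type]
          exact Finset.sum_congr rfl (fun i _ => Finset.sum_congr rfl
            (fun r _ => Fintype.sum_prod_type
              (f := fun q : Fin f × Fin 24 => E i r q.1 q.2)))
      _ = ∑ i, ∑ j, ∑ r, ∑ s, E i r j s :=
          Finset.sum_congr rfl (fun i _ => Finset.sum_comm)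
  -- entries of products are ±1
  have hwpm : ∀ i r j s (c : Fin 24), H i r c * H j s c = 1 ∨ H i r c * H j s c = -1 := by
    intro i r j s c
    rcases hE i r c with h1 | h1 <;> rcases hE j s c with h2 | h2 <;> rw [h1, h2] <;> norm_num
  -- diagonal blocks
  have hdiag : ∀ i, ∑ r, ∑ s, E i r i s = 3108864 := by
    intro i
    have hval : ∀ r s : Fin 24, E i r i s = if r = s then 134596 else -220 := by
      intro r s
      by_cases hrs : r = s
      · subst hrs
        rw [if_pos rfl]
        apply G_val_diag _ (hwpm i r i r)
        have := hOrtho i r r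
        rwa [if_pos rfl] at this
      · rw [if_neg hrs]
        have hsum0 : ∑ c, H i r c * H i s c = 0 := by
          have := hOrtho i r s
          rwa [if_neg hrs] at this
        have := G_val_cross (fun c => H i r c * H i s c) (hwpm i r i s) (Or.inl hsum0)
        rw [hEdef]
        simp only []
        rw [this, hsum0]
        norm_num
    have hrowsum : ∀ r : Fin 24, ∑ s, E i r i s = 129536 := by
      intro r
      have h1 : ∀ s : Fin 24, E i r i s = -220 + (if r = s then (134816:ℝ) else 0) := by
        intro s
        rw [hval r s]
        split <;> norm_num
      rw [Finset.sum_congr rfl (fun s _ => h1 s), Finset.sum_add_distrib,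
        Finset.sum_const, Finset.sum_ite_eq]
      norm_num
    rw [Finset.sum_congr rfl (fun r _ => hrowsum r), Finset.sum_const]
    norm_num
  -- off-diagonal blocks
  have hoff : ∀ i j, i ≠ j → ∑ r, ∑ s, E i r j s = -208896 := by
    intro i j hij
    obtain ⟨hWent, hWorth⟩ := hQU i j hij
    set W := ((1:ℝ)/12) • (H i * (H j)ᵀ) with hWdef
    have hsum : ∀ r s, ∑ c, H i r c * H j s c = 12 * W r s := by
      intro r s
      rw [hWdef]
      simp only [Matrix.smul_apply, Matrix.mul_apply, Matrix.transpose_apply, smul_eq_mul]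
      ring
    have hval : ∀ r s, E i r j s = -220 - 856 * (W r s)^2 := by
      intro r s
      have he : ∑ c, H i r c * H j s c = 0 ∨ ∑ c, H i r c * H j s c = 12 ∨
          ∑ c, H i r c * H j s c = -12 := by
        rcases hWent r s with h | h | h <;> rw [hsum r s, h] <;> norm_num
      have := G_val_cross (fun c => H i r c * H j s c) (hwpm i r j s) he
      rw [hEdef]
      simp only []
      rw [this, hsum r s]
      field_simp
    have hrow : ∀ r : Fin 24, ∑ s, (W r s)^2 = 4 := by
      intro r
      have h := congrFun (congrFun hWorth r) r
      simp only [Matrix.mul_apply, Matrix.transpose_apply, Matrix.smul_apply, Matrix.one_apply,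
        smul_eq_mul] at h
      have h4 : ∑ s, W r s * W r s = 4 := by simpa using h
      calc ∑ s, (W r s)^2 = ∑ s, W r s * W r s :=
            Finset.sum_congr rfl (fun s _ => pow_two (W r s))
        _ = 4 := h4
    have hrowE : ∀ r : Fin 24, ∑ s, E i r j s = -8704 := by
      intro r
      rw [Finset.sum_congr rfl (fun s _ => hval r s), Finset.sum_sub_distrib,
        Finset.sum_const, ← Finset.mul_sum, hrow r]
      norm_num
    rw [Finset.sum_congr rfl (fun r _ => hrowE r), Finset.sum_const]
    norm_num
  -- total
  have htot : ∑ i, ∑ j, ∑ r, ∑ s, E i r j s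
      = (f:ℝ) * ((f:ℝ) * (-208896) + 3317760) := by
    have h1 : ∀ i, ∑ j, ∑ r, ∑ s, E i r j s = (f:ℝ) * (-208896) + 3317760 := by
      intro i
      have h2 : ∀ j, ∑ r, ∑ s, E i r j s = -208896 + (if i = j then (3317760:ℝ) else 0) := by
        intro j
        by_cases hij : i = j
        · subst hij
          rw [hdiag i, if_pos rfl]
          norm_num
        · rw [hoff i j hij, if_neg hij]
          norm_num
      rw [Finset.sum_congr rfl (fun j _ => h2 j), Finset.sum_add_distrib,
        Finset.sum_const, Finset.sum_ite_eq]
      simp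
    rw [Finset.sum_congr rfl (fun i _ => h1 i), Finset.sum_const]
    simp
    ring_nf
  rw [hswap, htot] at hT
  nlinarith [hT, hf28]
end

section
/- Let H₁, …, H_f be Hadamard matrices of order 24 such that for all i ≠ j, (1/8)·H_i H_jᵀ is a weighing matrix of order 24 and weight 9 (i.e., the H_i are mutually quasi-unbiased for parameters (24, 9, 64)). Then f ≤ 208. -/
open Finset Matrix

namespace QUBaux

variable {α : Type*} [DecidableEq α]

lemma esymm_insert (z : α → ℝ) (a : α) (s : Finset α) (ha : a ∉ s) (n : ℕ) :
    ∑ S ∈ (insert a s).powersetCard (n + 1), ∏ b ∈ S, z b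
      = (∑ S ∈ s.powersetCard (n + 1), ∏ b ∈ S, z b)
        + z a * ∑ S ∈ s.powersetCard n, ∏ b ∈ S, z b := by
  rw [Finset.powersetCard_succ_insert ha, Finset.sum_union, Finset.sum_image, Finset.mul_sum]
  · congr 1
    refine Finset.sum_congr rfl fun S hS => ?_
    rw [Finset.prod_insert fun haS => ha ((Finset.mem_powersetCard.mp hS).1 haS)]
  · intro S hS T hT hST
    have haS : a ∉ S := fun h => ha ((Finset.mem_powersetCard.mp hS).1 h)
    have haT : a ∉ T := fun h => ha ((Finset.mem_powersetCard.mp hT).1 h)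
    have := congrArg (fun X => Finset.erase X a) hST
    simpa [Finset.erase_insert haS, Finset.erase_insert haT] using this
  · rw [Finset.disjoint_left]
    intro S hS hS'
    have haS : a ∉ S := fun h => ha ((Finset.mem_powersetCard.mp hS).1 h)
    obtain ⟨T, hT, rfl⟩ := Finset.mem_image.mp hS'
    exact haS (Finset.mem_insert_self a T)

omit [DecidableEq α] in
lemma esymm_one (z : α → ℝ) (s : Finset α) :
    ∑ S ∈ s.powersetCard 1, ∏ b ∈ S, z b = ∑ a ∈ s, z a := by
  rw [Finset.powersetCard_one, Finset.sum_map]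
  simp

lemma sq_sum (z : α → ℝ) (s : Finset α) (hz : ∀ a ∈ s, z a ^ 2 = 1) :
    (∑ a ∈ s, z a) ^ 2
      = 2 * (∑ S ∈ s.powersetCard 2, ∏ b ∈ S, z b) + s.card := by
  induction s using Finset.induction with
  | empty =>
    rw [show Finset.powersetCard 2 (∅ : Finset α) = ∅ by
      rw [Finset.powersetCard_eq_empty]; simp]
    simp
  | @insert a s ha ih =>
    have hz' : ∀ b ∈ s, z b ^ 2 = 1 := fun b hb => hz b (Finset.mem_insert_of_mem hb)
    have hza : z a ^ 2 = 1 := hz a (Finset.mem_insert_self a s)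
    rw [Finset.sum_insert ha, esymm_insert z a s ha 1, esymm_one,
      Finset.card_insert_of_notMem ha]
    push_cast
    nlinarith [ih hz']

lemma cube_sum (z : α → ℝ) (s : Finset α) (hz : ∀ a ∈ s, z a ^ 2 = 1) :
    (∑ a ∈ s, z a) ^ 3
      = 6 * (∑ S ∈ s.powersetCard 3, ∏ b ∈ S, z b)
        + (3 * (s.card : ℝ) - 2) * ∑ a ∈ s, z a := by
  induction s using Finset.induction with
  | empty =>
    rw [show Finset.powersetCard 3 (∅ : Finset α) = ∅ by
      rw [Finset.powersetCard_eq_empty]; simp]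
    simp
  | @insert a s ha ih =>
    have hz' : ∀ b ∈ s, z b ^ 2 = 1 := fun b hb => hz b (Finset.mem_insert_of_mem hb)
    have hza : z a ^ 2 = 1 := hz a (Finset.mem_insert_self a s)
    have hza3 : z a ^ 3 = z a := by
      have h : z a ^ 3 = z a * z a ^ 2 := by ring
      rw [h, hza, mul_one]
    rw [Finset.sum_insert ha, esymm_insert z a s ha 2,
      Finset.card_insert_of_notMem ha]
    push_cast
    have h2 := sq_sum z s hz'
    have h3 := ih hz'
    linear_combination h3 + 3 * z a * h2 + hza3 + 3 * (∑ x ∈ s, z x) * hza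

end QUBaux

theorem quasi_unbiased_bound_14 (f : ℕ)
    (H : Fin f → Matrix (Fin 24) (Fin 24) ℝ)
    (hHad : ∀ i, _root_.IsHadamard (H i))
    (hQU : ∀ i j, i ≠ j →
      IsWeighing 9 (((1 : ℝ) / 8) • (H i * (H j)ᵀ))) :
    f ≤ 208 := by
  classical
  set U : Finset (Finset (Fin 24)) :=
    Finset.powersetCard 1 Finset.univ ∪ Finset.powersetCard 3 Finset.univ with hU
  -- the embedding of rows
  set v : Fin f × Fin 24 → (↥U → ℝ) :=
    fun p S => ∏ b ∈ (S : Finset (Fin 24)), H p.1 p.2 b with hv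
  have hent : ∀ i r c, H i r c = 1 ∨ H i r c = -1 := fun i => (hHad i).1
  have hsq : ∀ i r c, (H i r c) ^ 2 = 1 := by
    intro i r c; rcases hent i r c with h | h <;> rw [h] <;> norm_num
  -- the inner product of two rows
  set t : Fin f × Fin 24 → Fin f × Fin 24 → ℝ :=
    fun p q => ∑ c, H p.1 p.2 c * H q.1 q.2 c with ht
  have htmat : ∀ p q : Fin f × Fin 24, t p q = (H p.1 * (H q.1)ᵀ) p.2 q.2 := by
    intro p q
    simp [ht, Matrix.mul_apply, Matrix.transpose_apply]
  have htself : ∀ p : Fin f × Fin 24, t p p = 24 := by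
    intro p
    have : ∀ c, H p.1 p.2 c * H p.1 p.2 c = 1 := by
      intro c; have := hsq p.1 p.2 c; nlinarith [this]
    simp [ht, this]
  have htne : ∀ p q : Fin f × Fin 24, p ≠ q → t p q = 0 ∨ t p q = 8 ∨ t p q = -8 := by
    intro p q hpq
    rcases eq_or_ne p.1 q.1 with h1 | h1
    · -- same matrix, different rows
      have h2 : p.2 ≠ q.2 := by
        intro h2; exact hpq (Prod.ext h1 h2)
      left
      rw [htmat, h1, (hHad q.1).2]
      simp [Matrix.one_apply, h2]
    · -- different matrices
      have hW := (hQU p.1 q.1 h1).1 p.2 q.2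
      have : (((1 : ℝ) / 8) • (H p.1 * (H q.1)ᵀ)) p.2 q.2
          = (1 / 8) * (H p.1 * (H q.1)ᵀ) p.2 q.2 := rfl
      rw [this] at hW
      rw [htmat]
      rcases hW with h | h | h
      · left; linarith
      · right; left; linarith
      · right; right; linarith
  -- the key dot product formula
  have hdot : ∀ p q : Fin f × Fin 24,
      ∑ S : ↥U, v p S * v q S = ((t p q) ^ 3 - 64 * t p q) / 6 := by
    intro p q
    set z : Fin 24 → ℝ := fun c => H p.1 p.2 c * H q.1 q.2 c with hz
    have hz1 : ∀ a ∈ (Finset.univ : Finset (Fin 24)), z a ^ 2 = 1 := by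
      intro a _
      have h1 := hsq p.1 p.2 a
      have h2 := hsq q.1 q.2 a
      simp only [hz, mul_pow]
      rw [h1, h2]; ring
    have hvz : ∀ S : ↥U, v p S * v q S = ∏ b ∈ (S : Finset (Fin 24)), z b := by
      intro S
      simp [hv, hz, Finset.prod_mul_distrib]
    rw [Finset.sum_congr rfl (fun S _ => hvz S)]
    rw [Finset.sum_coe_sort U (fun S => ∏ b ∈ S, z b)]
    have hdisj : Disjoint (Finset.powersetCard 1 (Finset.univ : Finset (Fin 24)))
        (Finset.powersetCard 3 Finset.univ) := by
      rw [Finset.disjoint_left]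
      intro S hS hS'
      have := (Finset.mem_powersetCard.mp hS).2
      have := (Finset.mem_powersetCard.mp hS').2
      omega
    rw [hU, Finset.sum_union hdisj]
    have h1 := QUBaux.esymm_one z (Finset.univ : Finset (Fin 24))
    have h3 := QUBaux.cube_sum z (Finset.univ : Finset (Fin 24)) hz1
    have hcard : ((Finset.univ : Finset (Fin 24)).card : ℝ) = 24 := by simp
    have htz : t p q = ∑ a, z a := rfl
    rw [h1, htz]
    rw [hcard] at h3
    linarith [h3]
  -- linear independence
  have hli : LinearIndependent ℝ v := by
    rw [Fintype.linearIndependent_iff]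
    intro g hg q
    have h0 : ∑ p, g p * ((t p q ^ 3 - 64 * t p q) / 6) = 0 := by
      calc ∑ p, g p * ((t p q ^ 3 - 64 * t p q) / 6)
          = ∑ p, g p * (∑ S : ↥U, v p S * v q S) := by
            refine Finset.sum_congr rfl fun p _ => ?_
            rw [hdot p q]
        _ = ∑ p, ∑ S : ↥U, g p * v p S * v q S := by
            simp [Finset.mul_sum, mul_assoc]
        _ = ∑ S : ↥U, ∑ p, g p * v p S * v q S := Finset.sum_comm
        _ = ∑ S : ↥U, (∑ p, g p • v p) S * v q S := by
            refine Finset.sum_congr rfl fun S _ => ?_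
            simp [Finset.sum_apply, Finset.sum_mul]
        _ = 0 := by rw [hg]; simp
    have hterm : ∀ p ∈ (Finset.univ : Finset (Fin f × Fin 24)), p ≠ q →
        g p * ((t p q ^ 3 - 64 * t p q) / 6) = 0 := by
      intro p _ hpq
      rcases htne p q hpq with h | h | h <;> rw [h] <;> norm_num
    rw [Finset.sum_eq_single q hterm (fun h => absurd (Finset.mem_univ q) h)] at h0
    rw [htself q] at h0
    norm_num at h0
    exact h0
  have hcard := hli.fintype_card_le_finrank
  have hrank : Module.finrank ℝ (↥U → ℝ) = U.card := by
    rw [Module.finrank_pi]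
    exact Fintype.card_coe U
  have hdisj : Disjoint (Finset.powersetCard 1 (Finset.univ : Finset (Fin 24)))
      (Finset.powersetCard 3 Finset.univ) := by
    rw [Finset.disjoint_left]
    intro S hS hS'
    have := (Finset.mem_powersetCard.mp hS).2
    have := (Finset.mem_powersetCard.mp hS').2
    omega
  have hUcard : U.card = 2048 := by
    rw [hU, Finset.card_union_of_disjoint hdisj, Finset.card_powersetCard,
      Finset.card_powersetCard, Finset.card_univ]
    decide
  rw [hrank, hUcard, Fintype.card_prod, Fintype.card_fin, Fintype.card_fin] at hcard
  omega
end

section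
/- Let H₁, …, H_f be Hadamard matrices of order 40 such that for all i ≠ j, (1/8)·H_i H_jᵀ is a weighing matrix of order 40 and weight 25 (i.e., the H_i are mutually quasi-unbiased for parameters (40, 25, 64)). Then f ≤ 30. -/
open Finset Matrix

noncomputable def qM (A : Matrix (Fin 40) (Fin 40) ℝ) (a b c e : Fin 40) : ℝ :=
  ∑ k, A k a * A k b * A k c * A k e

noncomputable def qS (a b c e : Fin 40) : ℝ :=
  (if a = b then 1 else 0) * (if c = e then 1 else 0)
  + (if a = c then 1 else 0) * (if b = e then 1 else 0)
  + (if a = e then 1 else 0) * (if b = c then 1 else 0)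

noncomputable def qN (A : Matrix (Fin 40) (Fin 40) ℝ) (a b c e : Fin 40) : ℝ :=
  21 * qM A a b c e - 800 * qS a b c e

lemma swap42 {ι : Type*} [Fintype ι] (g : Fin 40 → Fin 40 → Fin 40 → Fin 40 → ι → ι → ℝ) :
    ∑ a, ∑ b, ∑ c, ∑ e, ∑ k, ∑ l, g a b c e k l
      = ∑ k, ∑ l, ∑ a, ∑ b, ∑ c, ∑ e, g a b c e k l := by
  simpa [Fintype.sum_prod_type] using
    Finset.sum_comm (s := (univ : Finset (Fin 40 × Fin 40 × Fin 40 × Fin 40)))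
      (t := (univ : Finset (ι × ι)))
      (f := fun x y => g x.1 x.2.1 x.2.2.1 x.2.2.2 y.1 y.2)

lemma keyMM (A B : Matrix (Fin 40) (Fin 40) ℝ) :
    ∑ a, ∑ b, ∑ c, ∑ e, qM A a b c e * qM B a b c e
      = ∑ k, ∑ l, ((A * Bᵀ) k l) ^ 4 := by
  have h1 : ∀ k l : Fin 40, ((A * Bᵀ) k l) ^ 4
      = ∑ a, ∑ b, ∑ c, ∑ e,
          (A k a * A k b * A k c * A k e) * (B l a * B l b * B l c * B l e) := by
    intro k l
    have h2 : (A * Bᵀ) k l = ∑ a, A k a * B l a := by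
      simp [Matrix.mul_apply, Matrix.transpose_apply]
    rw [h2]
    have h3 : (∑ a, A k a * B l a) ^ 4
        = (∑ a, A k a * B l a) * ((∑ b, A k b * B l b) *
            ((∑ c, A k c * B l c) * (∑ e, A k e * B l e))) := by ring
    rw [h3]
    simp only [Finset.sum_mul, Finset.mul_sum]
    refine Finset.sum_congr rfl fun a _ => Finset.sum_congr rfl fun b _ =>
      Finset.sum_congr rfl fun c _ => Finset.sum_congr rfl fun e _ => by ring
  simp only [h1]
  rw [← swap42 (fun a b c e k l =>
    (A k a * A k b * A k c * A k e) * (B l a * B l b * B l c * B l e))]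
  unfold qM
  simp only [Finset.sum_mul_sum]

lemma diagMM (A : Matrix (Fin 40) (Fin 40) ℝ) (hA : _root_.IsHadamard A) :
    ∑ k, ∑ l, ((A * Aᵀ) k l) ^ 4 = 102400000 := by
  rw [hA.2]
  have h : ∀ k l : Fin 40, ((((40:ℕ):ℝ) • (1 : Matrix (Fin 40) (Fin 40) ℝ)) k l) ^ 4
      = if k = l then (2560000:ℝ) else 0 := by
    intro k l
    by_cases h : k = l <;> simp [h, Matrix.one_apply] <;> norm_num
  simp only [h]
  simp [Finset.sum_ite_eq, Finset.card_univ]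
  norm_num

lemma crossMM (A B : Matrix (Fin 40) (Fin 40) ℝ)
    (h : IsWeighing 25 (((1:ℝ)/8) • (A * Bᵀ))) :
    ∑ k, ∑ l, ((A * Bᵀ) k l) ^ 4 = 4096000 := by
  set W := ((1:ℝ)/8) • (A * Bᵀ) with hWdef
  have hAB : ∀ k l, (A * Bᵀ) k l = 8 * W k l := by
    intro k l; simp [hWdef, Matrix.smul_apply]
  have h4 : ∀ k l, ((A * Bᵀ) k l) ^ 4 = 4096 * (W k l * W k l) := by
    intro k l; rw [hAB]
    rcases h.1 k l with hw | hw | hw <;> rw [hw] <;> norm_num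
  have hrow : ∀ k, ∑ l, W k l * W k l = 25 := by
    intro k
    have h2 : (W * Wᵀ) k k = (((25:ℕ):ℝ) • (1 : Matrix (Fin 40) (Fin 40) ℝ)) k k := by
      rw [h.2]
    simpa [Matrix.mul_apply, Matrix.transpose_apply, Matrix.one_apply] using h2
  have h5 : ∀ k : Fin 40, ∑ l, 4096 * (W k l * W k l) = 102400 := by
    intro k; rw [← Finset.mul_sum, hrow]; norm_num
  simp only [h4, h5]
  norm_num [Finset.sum_const, Finset.card_univ]

lemma qS_split (M : Fin 40 → Fin 40 → Fin 40 → Fin 40 → ℝ) (a b c e : Fin 40) :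
    M a b c e * qS a b c e
      = (if c = e then (if a = b then M a b c e else 0) else 0)
      + (if b = e then (if a = c then M a b c e else 0) else 0)
      + (if b = c then (if a = e then M a b c e else 0) else 0) := by
  unfold qS
  split_ifs <;> ring

lemma sum_mul_qS (M : Fin 40 → Fin 40 → Fin 40 → Fin 40 → ℝ) :
    ∑ a, ∑ b, ∑ c, ∑ e, M a b c e * qS a b c e
      = (∑ a, ∑ c, M a a c c) + (∑ a, ∑ b, M a b a b) + (∑ a, ∑ b, M a b b a) := by
  simp only [qS_split, Finset.sum_add_distrib]
  congr 1
  · congr 1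
    · -- term 1 : conditions c = e then a = b
      simp [Finset.sum_ite_eq, Finset.sum_ite_irrel]
    · -- term 2 : conditions b = e then a = c
      simp [Finset.sum_ite_eq, Finset.sum_ite_irrel]
  · -- term 3 : conditions b = c then a = e
    simp [Finset.sum_ite_eq, Finset.sum_ite_irrel]

lemma sum_qM_qS (A : Matrix (Fin 40) (Fin 40) ℝ)
    (hA : ∀ r c, A r c = 1 ∨ A r c = -1) :
    ∑ a, ∑ b, ∑ c, ∑ e, qM A a b c e * qS a b c e = 192000 := by
  have sq : ∀ r c, A r c * A r c = 1 := by
    intro r c; rcases hA r c with h | h <;> rw [h] <;> norm_num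
  rw [sum_mul_qS]
  have h1 : ∀ a c : Fin 40, qM A a a c c = 40 := by
    intro a c; unfold qM
    have : ∀ k : Fin 40, A k a * A k a * A k c * A k c = 1 := by
      intro k
      calc A k a * A k a * A k c * A k c = (A k a * A k a) * (A k c * A k c) := by ring
        _ = 1 := by rw [sq, sq]; norm_num
    simp [this, Finset.card_univ]
  have h2 : ∀ a b : Fin 40, qM A a b a b = 40 := by
    intro a b; unfold qM
    have : ∀ k : Fin 40, A k a * A k b * A k a * A k b = 1 := by
      intro k
      calc A k a * A k b * A k a * A k b = (A k a * A k a) * (A k b * A k b) := by ring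
        _ = 1 := by rw [sq, sq]; norm_num
    simp [this, Finset.card_univ]
  have h3 : ∀ a b : Fin 40, qM A a b b a = 40 := by
    intro a b; unfold qM
    have : ∀ k : Fin 40, A k a * A k b * A k b * A k a = 1 := by
      intro k
      calc A k a * A k b * A k b * A k a = (A k a * A k a) * (A k b * A k b) := by ring
        _ = 1 := by rw [sq, sq]; norm_num
    simp [this, Finset.card_univ]
  simp only [h1, h2, h3]
  simp [Finset.card_univ]
  norm_num

lemma sum_qS_qS :
    ∑ a, ∑ b, ∑ c, ∑ e, qS a b c e * qS a b c e = 5040 := by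
  rw [sum_mul_qS]
  have h1 : ∀ a c : Fin 40, qS a a c c = 1 + 2 * (if a = c then 1 else 0) := by
    intro a c; unfold qS
    by_cases h : a = c <;> simp [h] <;> norm_num
  have h2 : ∀ a b : Fin 40, qS a b a b = 1 + 2 * (if a = b then 1 else 0) := by
    intro a b; unfold qS
    by_cases h : a = b <;> simp [h, eq_comm] <;> norm_num
  have h3 : ∀ a b : Fin 40, qS a b b a = 1 + 2 * (if a = b then 1 else 0) := by
    intro a b; unfold qS
    by_cases h : a = b <;> simp [h, eq_comm] <;> norm_num
  simp only [h1, h2, h3, Finset.sum_add_distrib]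
  simp [Finset.sum_ite_eq, Finset.card_univ, Finset.mul_sum]
  norm_num

lemma gram (A B : Matrix (Fin 40) (Fin 40) ℝ) (V : ℝ)
    (hA : ∀ r c, A r c = 1 ∨ A r c = -1)
    (hB : ∀ r c, B r c = 1 ∨ B r c = -1)
    (hMM : ∑ k, ∑ l, ((A * Bᵀ) k l) ^ 4 = V) :
    ∑ a, ∑ b, ∑ c, ∑ e, qN A a b c e * qN B a b c e = 441 * V - 3225600000 := by
  have hbody : ∀ a b c e : Fin 40, qN A a b c e * qN B a b c e
      = 441 * (qM A a b c e * qM B a b c e)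
        - 16800 * (qM A a b c e * qS a b c e)
        - 16800 * (qM B a b c e * qS a b c e)
        + 640000 * (qS a b c e * qS a b c e) := by
    intro a b c e; unfold qN; ring
  simp only [hbody, Finset.sum_add_distrib, Finset.sum_sub_distrib, ← Finset.mul_sum]
  rw [keyMM, hMM, sum_qM_qS A hA, sum_qM_qS B hB, sum_qS_qS]
  ring

theorem quasi_unbiased_bound_15 (f : ℕ)
    (H : Fin f → Matrix (Fin 40) (Fin 40) ℝ)
    (hHad : ∀ i, _root_.IsHadamard (H i))
    (hQU : ∀ i j, i ≠ j →
      IsWeighing 25 (((1 : ℝ) / 8) • (H i * (H j)ᵀ))) :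
    f ≤ 30 := by
  by_contra hf
  push_neg at hf
  have hgram : ∀ i j : Fin f,
      ∑ a, ∑ b, ∑ c, ∑ e, qN (H i) a b c e * qN (H j) a b c e
        = if i = j then (41932800000 : ℝ) else -1419264000 := by
    intro i j
    by_cases hij : i = j
    · subst hij
      rw [gram (H i) (H i) 102400000 (hHad i).1 (hHad i).1 (diagMM (H i) (hHad i))]
      norm_num
    · rw [gram (H i) (H j) 4096000 (hHad i).1 (hHad j).1
        (crossMM (H i) (H j) (hQU i j hij))]
      simp [hij]
      norm_num
  have hpos : (0:ℝ) ≤ ∑ a, ∑ b, ∑ c, ∑ e, (∑ i, qN (H i) a b c e) ^ 2 := by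
    refine Finset.sum_nonneg fun a _ => Finset.sum_nonneg fun b _ =>
      Finset.sum_nonneg fun c _ => Finset.sum_nonneg fun e _ => sq_nonneg _
  have hexp : ∑ a, ∑ b, ∑ c, ∑ e, (∑ i, qN (H i) a b c e) ^ 2
      = ∑ i : Fin f, ∑ j : Fin f,
          ∑ a, ∑ b, ∑ c, ∑ e, qN (H i) a b c e * qN (H j) a b c e := by
    have h1 : ∀ a b c e : Fin 40, (∑ i, qN (H i) a b c e) ^ 2
        = ∑ i : Fin f, ∑ j : Fin f, qN (H i) a b c e * qN (H j) a b c e := by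
      intro a b c e
      rw [sq, Finset.sum_mul_sum]
    simp only [h1]
    exact swap42 (fun a b c e i j => qN (H i) a b c e * qN (H j) a b c e)
  rw [hexp] at hpos
  simp only [hgram] at hpos
  have hrow : ∀ i : Fin f, (∑ j : Fin f, if i = j then (41932800000:ℝ) else -1419264000)
      = (f:ℝ) * (-1419264000) + 43352064000 := by
    intro i
    have : ∀ j : Fin f, (if i = j then (41932800000:ℝ) else -1419264000)
        = -1419264000 + (if i = j then (43352064000:ℝ) else 0) := by
      intro j; by_cases h : i = j <;> simp [h] <;> norm_num
    simp only [this, Finset.sum_add_distrib, Finset.sum_const, Finset.card_univ,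
      Finset.sum_ite_eq, Fintype.card_fin, Finset.mem_univ, if_true]
    push_cast
    ring
  simp only [hrow, Finset.sum_const, Finset.card_univ, Fintype.card_fin] at hpos
  rw [nsmul_eq_mul] at hpos
  have hf' : (31:ℝ) ≤ (f:ℝ) := by exact_mod_cast hf
  nlinarith [hpos, hf', mul_nonneg (by linarith : (0:ℝ) ≤ (f:ℝ))
    (by linarith : (0:ℝ) ≤ (f:ℝ) - 31)]
end

section
/- Let X be a finite subset of the unit sphere S^{34} in ℝ^{35} such that for all distinct x, y ∈ X, the inner product ⟨x, y⟩ lies in {1/5, −1/35, −1/7}. Then |X| ≤ 737. In particular, if |X| = 36w for a positive integer w, then w ≤ 20. -/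
open Finset

noncomputable def ee (i j : Fin 35) : ℝ := if i = j then 1 else 0

lemma pull {ι : Type*} [Fintype ι] (c : ℝ) (g : ι → ℝ) :
    ∑ k, c * g k = c * ∑ k, g k := (Finset.mul_sum _ _ _).symm

lemma pull' {ι : Type*} [Fintype ι] (c : ℝ) (g : ι → ℝ) :
    ∑ k, g k * c = (∑ k, g k) * c := (Finset.sum_mul _ _ _).symm

lemma eL (i : Fin 35) (f : Fin 35 → ℝ) : ∑ j, ee i j * f j = f i := by
  simp [ee, ite_mul]

lemma eL' (i : Fin 35) (f : Fin 35 → ℝ) : ∑ j, f j * ee i j = f i := by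
  simp [ee, mul_ite]

lemma eR (i : Fin 35) (f : Fin 35 → ℝ) : ∑ j, ee j i * f j = f i := by
  simp [ee, ite_mul]

lemma eR' (i : Fin 35) (f : Fin 35 → ℝ) : ∑ j, f j * ee j i = f i := by
  simp [ee, mul_ite]

lemma eSq (i : Fin 35) : ∑ k, ee i k * ee i k = 1 := by simp [ee, ite_mul]

lemma eProd (i j : Fin 35) : ∑ k, ee i k * ee j k = ee i j := by
  simp [ee, ite_mul, Finset.sum_ite_eq]

lemma eDiag : ∑ k : Fin 35, ee k k = 35 := by simp [ee]

/-- degree-2 feature map -/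
noncomputable def F2_s16 (x : Fin 35 → ℝ) (p : Fin 35 × Fin 35) : ℝ :=
  35*(x p.1*x p.2) - ee p.1 p.2

/-- degree-3 (harmonic) feature map -/
noncomputable def F3 (x : Fin 35 → ℝ) (p : Fin 35 × Fin 35 × Fin 35) : ℝ :=
  37*(x p.1*x p.2.1*x p.2.2) - ee p.1 p.2.1*x p.2.2 - ee p.1 p.2.2*x p.2.1
    - ee p.2.1 p.2.2*x p.1

/-- degree-4 feature map -/
noncomputable def F5 (x : Fin 35 → ℝ) (p : (Fin 35 × Fin 35 × Fin 35) × Fin 35) : ℝ :=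
  F3 x p.1 * x p.2

lemma pw2 (x y : Fin 35 → ℝ) (hx : ∑ i, x i * x i = 1) (hy : ∑ i, y i * y i = 1) :
    ∑ p : Fin 35 × Fin 35, F2_s16 x p * F2_s16 y p
      = 1225*(∑ i, x i * y i)^2 - 35 := by
  rw [Fintype.sum_prod_type]
  simp only [F2_s16]
  have h : ∀ i j : Fin 35, (35*(x i*x j) - ee i j) * (35*(y i*y j) - ee i j)
      = 1225*((x i*y i)*(x j*y j)) - 35*(ee i j*(y i*y j)) - 35*(ee i j*(x i*x j))
        + ee i j * ee i j := by intros; ring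
  simp only [h, Finset.sum_add_distrib, Finset.sum_sub_distrib]
  simp only [pull, pull', eL, eL', eR, eR', eSq, eProd, eDiag, hx, hy]
  ring

lemma pw3 (x y : Fin 35 → ℝ) (hx : ∑ i, x i * x i = 1) (hy : ∑ i, y i * y i = 1) :
    ∑ p : Fin 35 × Fin 35 × Fin 35, F3 x p * F3 y p
      = 1369*(∑ i, x i * y i)^3 - 111*(∑ i, x i * y i) := by
  rw [Fintype.sum_prod_type]
  simp only [Fintype.sum_prod_type, F3]
  have h : ∀ i j k : Fin 35,
      (37*(x i*x j*x k) - ee i j*x k - ee i k*x j - ee j k*x i)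
        * (37*(y i*y j*y k) - ee i j*y k - ee i k*y j - ee j k*y i)
      = 1369*((x i*y i)*((x j*y j)*(x k*y k)))
        - 37*((ee i j*(x i*x j))*(x k*y k))
        - 37*((x j*y j)*(x i*(ee i k*x k)))
        - 37*((x i*y i)*(x j*(ee j k*x k)))
        - 37*((ee i j*(y i*y j))*(x k*y k))
        - 37*((x j*y j)*(y i*(ee i k*y k)))
        - 37*((x i*y i)*(y j*(ee j k*y k)))
        + (ee i j*ee i j)*(x k*y k)
        + ee i j*((ee i k*x k)*y j)
        + ee i j*((ee j k*x k)*y i)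
        + ee i j*(x j*(ee i k*y k))
        + (x j*y j)*(ee i k*ee i k)
        + (x j*y i)*(ee i k*ee j k)
        + ee i j*(x i*(ee j k*y k))
        + (x i*y j)*(ee i k*ee j k)
        + (x i*y i)*(ee j k*ee j k) := by intros; ring
  simp only [h, Finset.sum_add_distrib, Finset.sum_sub_distrib]
  simp only [pull, pull', eL, eL', eR, eR', eSq, eProd, eDiag, hx, hy]
  ring

lemma pw5 (x y : Fin 35 → ℝ) (hx : ∑ i, x i * x i = 1) (hy : ∑ i, y i * y i = 1) :
    ∑ p : (Fin 35 × Fin 35 × Fin 35) × Fin 35, F5 x p * F5 y p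
      = 1369*(∑ i, x i * y i)^4 - 111*(∑ i, x i * y i)^2 := by
  rw [Fintype.sum_prod_type]
  have h : ∀ (q : Fin 35 × Fin 35 × Fin 35) (l : Fin 35),
      F5 x (q, l) * F5 y (q, l) = (F3 x q * F3 y q) * (x l * y l) := by
    intros; simp only [F5]; ring
  simp only [h, pull, pull']
  rw [pw3 x y hx hy]
  ring

lemma pullF {α : Type*} (s : Finset α) (c : ℝ) (g : α → ℝ) :
    ∑ k ∈ s, c * g k = c * ∑ k ∈ s, g k := (Finset.mul_sum _ _ _).symm

lemma sos {ι : Type*} [Fintype ι] (X : Finset (Fin 35 → ℝ))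
    (Φ : (Fin 35 → ℝ) → ι → ℝ) :
    0 ≤ ∑ x ∈ X, ∑ y ∈ X, ∑ p, Φ x p * Φ y p := by
  have h : ∑ x ∈ X, ∑ y ∈ X, ∑ p, Φ x p * Φ y p = ∑ p, (∑ x ∈ X, Φ x p)^2 := by
    calc ∑ x ∈ X, ∑ y ∈ X, ∑ p, Φ x p * Φ y p
        = ∑ x ∈ X, ∑ p, ∑ y ∈ X, Φ x p * Φ y p :=
          Finset.sum_congr rfl fun x _ => Finset.sum_comm
      _ = ∑ p, ∑ x ∈ X, ∑ y ∈ X, Φ x p * Φ y p := Finset.sum_comm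
      _ = ∑ p, (∑ x ∈ X, Φ x p)^2 := by
          refine Finset.sum_congr rfl fun p _ => ?_
          rw [sq, Finset.sum_mul_sum]
  rw [h]
  positivity

theorem three_distance_bound_36 (X : Finset (Fin 35 → ℝ))
    (hX : ∀ x ∈ X, dotR x x = 1)
    (hA : ∀ x ∈ X, ∀ y ∈ X, x ≠ y →
      dotR x y = 1 / 5 ∨ dotR x y = -(1 / 35) ∨ dotR x y = -(1 / 7)) :
    X.card ≤ 737 ∧ ∀ w : ℕ, 0 < w → X.card = 36 * w → w ≤ 20 := by
  have hunit : ∀ x ∈ X, ∑ i, x i * x i = 1 := fun x hx => hX x hx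
  set N : ℝ := (X.card : ℝ) with hN
  -- kernel nonnegativity
  have E2 : 0 ≤ ∑ x ∈ X, ∑ y ∈ X, (1225*(dotR x y)^2 - 35) := by
    have := sos X F2_s16
    rw [Finset.sum_congr rfl fun x hx => Finset.sum_congr rfl fun y hy =>
      pw2 x y (hunit x hx) (hunit y hy)] at this
    exact this
  have E3 : 0 ≤ ∑ x ∈ X, ∑ y ∈ X, (1369*(dotR x y)^3 - 111*(dotR x y)) := by
    have := sos X F3
    rw [Finset.sum_congr rfl fun x hx => Finset.sum_congr rfl fun y hy =>
      pw3 x y (hunit x hx) (hunit y hy)] at this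
    exact this
  have E5 : 0 ≤ ∑ x ∈ X, ∑ y ∈ X, (1369*(dotR x y)^4 - 111*(dotR x y)^2) := by
    have := sos X F5
    rw [Finset.sum_congr rfl fun x hx => Finset.sum_congr rfl fun y hy =>
      pw5 x y (hunit x hx) (hunit y hy)] at this
    exact this
  -- the certificate polynomial
  set Q : ℝ → ℝ := fun t => 3205031760 + 94974301*(1225*t^2 - 35)
    + 57109500*(1369*t^3 - 111*t) + 1730220625*(1369*t^4 - 111*t^2) with hQ
  have hdiag : ∑ x ∈ X, ∑ y ∈ X, Q (dotR x y) = N * 2364685747200 := by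
    have hrow : ∀ x ∈ X, ∑ y ∈ X, Q (dotR x y) = 2364685747200 := by
      intro x hx
      have h1 : Q (dotR x x) = 2364685747200 := by
        rw [hX x hx, hQ]; norm_num
      have hz : ∀ y ∈ X, y ≠ x → Q (dotR x y) = 0 := by
        intro y hy hne
        rcases hA x hx y hy (Ne.symm hne) with h | h | h <;>
          simp only [h, hQ] <;> norm_num
      rw [Finset.sum_eq_single_of_mem x hx hz, h1]
    rw [Finset.sum_congr rfl hrow, Finset.sum_const, nsmul_eq_mul, hN]
  have hsplit : ∑ x ∈ X, ∑ y ∈ X, Q (dotR x y)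
      = 3205031760 * N^2
        + 94974301 * (∑ x ∈ X, ∑ y ∈ X, (1225*(dotR x y)^2 - 35))
        + 57109500 * (∑ x ∈ X, ∑ y ∈ X, (1369*(dotR x y)^3 - 111*(dotR x y)))
        + 1730220625 * (∑ x ∈ X, ∑ y ∈ X, (1369*(dotR x y)^4 - 111*(dotR x y)^2)) := by
    have hconst : ∑ x ∈ X, ∑ y ∈ X, (3205031760 : ℝ) = 3205031760 * N^2 := by
      rw [Finset.sum_const, Finset.sum_const, nsmul_eq_mul, nsmul_eq_mul, hN]; ring
    simp only [hQ, Finset.sum_add_distrib, pullF, hconst]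
  have key : 3205031760 * N^2 ≤ N * 2364685747200 := by
    rw [← hdiag, hsplit]
    nlinarith [E2, E3, E5]
  have hcard : X.card ≤ 737 := by
    by_contra hc
    push_neg at hc
    have h738 : (738 : ℝ) ≤ N := by
      rw [hN]; exact_mod_cast hc
    have hNpos : (0:ℝ) < N := lt_of_lt_of_le (by norm_num) h738
    nlinarith [key, h738, hNpos]
  refine ⟨hcard, fun w hw hcw => ?_⟩
  omega
end

section
/- Let d, k₁, k₂, λ be positive integers and let X₁, X₂ ⊆ ℤ/dℤ with |X₁| = k₁ and |X₂| = k₂ form a 2-{d; k₁, k₂; λ} supplementary difference set, i.e., for every nonzero i ∈ ℤ/dℤ, |{(x, y) ∈ X₁ × X₁ : y − x = i}| + |{(x, y) ∈ X₂ × X₂ : y − x = i}| = λ. For j = 1, 2, let R_j be the d×d circulant matrix over ℝ with (R_j)_{s,t} = −1 if t − s ∈ X_j and (R_j)_{s,t} = 1 otherwise. Then R₁R₁ᵀ + R₂R₂ᵀ = 4(k₁+k₂−λ)·I + 2(d − 2(k₁+k₂−λ))·J, where I is the identity matrix and J is the all-ones matrix of order d. -/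
open Finset Matrix

private lemma sds_count_card (d : ℕ) [NeZero d] (X : Finset (ZMod d)) (s t : ZMod d) :
    (Finset.univ.filter (fun u : ZMod d => u - t ∈ X ∧ u - s ∈ X)).card =
      ((X ×ˢ X).filter (fun p => p.2 - p.1 = t - s)).card := by
  apply Finset.card_bij (fun u _ => (u - t, u - s))
  · intro u hu
    simp only [Finset.mem_filter, Finset.mem_univ, true_and] at hu
    simp only [Finset.mem_filter, Finset.mem_product]
    refine ⟨⟨hu.1, hu.2⟩, ?_⟩
    ring
  · intro u hu u' hu' h
    have := congrArg Prod.fst h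
    simpa using this
  · intro p hp
    simp only [Finset.mem_filter, Finset.mem_product] at hp
    refine ⟨p.1 + t, ?_, ?_⟩
    · simp only [Finset.mem_filter, Finset.mem_univ, true_and]
      constructor
      · simpa using hp.1.1
      · have h2 : p.1 + t - s = p.2 := by linear_combination -hp.2
        rw [h2]; exact hp.1.2
    · have h2 : p.1 + t - s = p.2 := by linear_combination -hp.2
      ext <;> simp [h2]

private lemma sds_diag_card (d : ℕ) [NeZero d] (X : Finset (ZMod d)) :
    ((X ×ˢ X).filter (fun p => p.2 - p.1 = 0)).card = X.card := by
  apply Finset.card_bij (fun p _ => p.1)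
  · intro p hp
    simp only [Finset.mem_filter, Finset.mem_product] at hp
    exact hp.1.1
  · intro p hp q hq h
    simp only [Finset.mem_filter, Finset.mem_product, sub_eq_zero] at hp hq
    ext
    · exact h
    · rw [hp.2, hq.2]; exact h
  · intro x hx
    exact ⟨(x, x), by simp [hx], rfl⟩

private lemma sds_key (d : ℕ) [NeZero d] (X : Finset (ZMod d)) (s t : ZMod d) :
    ∑ u : ZMod d, (if u - s ∈ X then (-1 : ℝ) else 1) * (if u - t ∈ X then (-1 : ℝ) else 1)
      = (d : ℝ) - 4 * X.card
        + 4 * ((X ×ˢ X).filter (fun p => p.2 - p.1 = t - s)).card := by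
  have h1 : ∀ u : ZMod d,
      (if u - s ∈ X then (-1 : ℝ) else 1) * (if u - t ∈ X then (-1 : ℝ) else 1)
        = 1 - 2 * (if u - s ∈ X then (1 : ℝ) else 0) - 2 * (if u - t ∈ X then (1 : ℝ) else 0)
          + 4 * (if u - t ∈ X ∧ u - s ∈ X then (1 : ℝ) else 0) := by
    intro u
    by_cases h : u - s ∈ X <;> by_cases h' : u - t ∈ X <;> simp [h, h'] <;> ring
  simp_rw [h1]
  rw [Finset.sum_add_distrib, Finset.sum_sub_distrib, Finset.sum_sub_distrib,
    ← Finset.mul_sum, ← Finset.mul_sum, ← Finset.mul_sum]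
  have hcardU : ∑ _u : ZMod d, (1 : ℝ) = (d : ℝ) := by
    simp [ZMod.card]
  have hsub : ∀ a : ZMod d,
      ∑ u : ZMod d, (if u - a ∈ X then (1 : ℝ) else 0) = (X.card : ℝ) := by
    intro a
    rw [Finset.sum_boole]
    congr 1
    apply Finset.card_bij (fun u _ => u - a)
    · intro u hu
      simpa using hu
    · intro u _ u' _ h
      simpa using h
    · intro x hx
      exact ⟨x + a, by simpa using hx, by ring⟩
  have hfilt : ∑ u : ZMod d, (if u - t ∈ X ∧ u - s ∈ X then (1 : ℝ) else 0)
      = (((X ×ˢ X).filter (fun p => p.2 - p.1 = t - s)).card : ℝ) := by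
    rw [Finset.sum_boole]
    rw [sds_count_card d X s t]
  rw [hcardU, hsub s, hsub t, hfilt]
  ring

theorem supplementary_difference_set_matrix_eq (d k₁ k₂ lam : ℕ) [NeZero d]
    (hk₁ : 0 < k₁) (hk₂ : 0 < k₂) (hlam : 0 < lam)
    (X₁ X₂ : Finset (ZMod d)) (hcard₁ : X₁.card = k₁) (hcard₂ : X₂.card = k₂)
    (hSDS : ∀ i : ZMod d, i ≠ 0 →
      ((X₁ ×ˢ X₁).filter (fun p => p.2 - p.1 = i)).card +
        ((X₂ ×ˢ X₂).filter (fun p => p.2 - p.1 = i)).card = lam)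
    (R₁ R₂ : Matrix (ZMod d) (ZMod d) ℝ)
    (hR₁ : ∀ s t, R₁ s t = if t - s ∈ X₁ then -1 else 1)
    (hR₂ : ∀ s t, R₂ s t = if t - s ∈ X₂ then -1 else 1) :
    R₁ * R₁ᵀ + R₂ * R₂ᵀ =
      (4 * ((k₁ : ℝ) + (k₂ : ℝ) - (lam : ℝ))) • (1 : Matrix (ZMod d) (ZMod d) ℝ) +
        (2 * ((d : ℝ) - 2 * ((k₁ : ℝ) + (k₂ : ℝ) - (lam : ℝ)))) •
          Matrix.of (fun _ _ => (1 : ℝ)) := by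
  ext s t
  simp only [Matrix.add_apply, Matrix.mul_apply, Matrix.transpose_apply, Matrix.smul_apply,
    Matrix.one_apply, Matrix.of_apply, smul_eq_mul, hR₁, hR₂]
  rw [sds_key d X₁ s t, sds_key d X₂ s t, hcard₁, hcard₂]
  by_cases hst : s = t
  · subst hst
    rw [sub_self, sds_diag_card d X₁, sds_diag_card d X₂, hcard₁, hcard₂]
    norm_num
    ring
  · have hne : t - s ≠ 0 := sub_ne_zero.mpr (Ne.symm hst)
    have h := hSDS (t - s) hne
    have hcast : (((X₁ ×ˢ X₁).filter (fun p => p.2 - p.1 = t - s)).card : ℝ) +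
        (((X₂ ×ˢ X₂).filter (fun p => p.2 - p.1 = t - s)).card : ℝ) = (lam : ℝ) := by
      exact_mod_cast congrArg (Nat.cast : ℕ → ℝ) h
    rw [if_neg hst]
    linarith
end
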